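/- Fix N ≥ 1 and 0 ≤ m ≤ N²−1, and set w := N²−m−1. Let λ be a Young diagram with w boxes contained in the square diagram □_N, and let S, S' ∈ 𝒯_λ. Then the number of tableaux T ∈ 𝒯_{□_N} with W'(T) = S equals the number of tableaux T ∈ 𝒯_{□_N} with W'(T) = S'. Equivalently, the conditional distribution of the water configuration W'(T) of a uniformly random T ∈ 𝒯_{□_N}, given that its shape is λ, is uniform on 𝒯_λ. -/

import Mathlib

/-!
Common framework.

A *cell* `(x, y)` has column `x` and row `y` (0-indexed, French convention, so the
bottom-left corner is `(0, 0)`).  A *filling* assigns to every cell a natural number,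
where `0` encodes an empty cell.
-/

abbrev Cell : Type := ℕ × ℕ

abbrev Filling : Type := Cell → ℕ

/-- One sliding step of jeu de taquin: given a filling `F` and the position `h` of the
hole, slide into the hole the smaller of the entries of the boxes directly to the right
of and directly above the hole (of those that exist); the hole moves to the vacated box.
If neither neighbouring box is occupied, nothing happens. -/
def slide (F : Filling) (h : Cell) : Filling × Cell :=
  let r := F (h.1 + 1, h.2)
  let u := F (h.1, h.2 + 1)
  if r = 0 ∧ u = 0 then (F, h)
  else if u = 0 ∨ (r ≠ 0 ∧ r < u) then
    (fun c => if c = h then r else if c = (h.1 + 1, h.2) then 0 else F c, (h.1 + 1, h.2))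
  else
    (fun c => if c = h then u else if c = (h.1, h.2 + 1) then 0 else F c, (h.1, h.2 + 1))

/-- Iterated sliding, with explicit fuel.  The process stops (and the result is stable
under adding more fuel) as soon as no box lies to the right of or above the hole. -/
def slideIter : ℕ → Filling → Cell → Filling × Cell
  | 0, F, h => (F, h)
  | fuel + 1, F, h =>
      if F (h.1 + 1, h.2) = 0 ∧ F (h.1, h.2 + 1) = 0 then (F, h)
      else slideIter fuel (slide F h).1 (slide F h).2

/-- Jeu de taquin with fuel `n` applied to `F`: erase the entry of the corner box
`(0,0)`, creating a hole there, then slide until no box lies to the right of or above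
the hole.  Returns the resulting filling together with the final position of the hole.
For a standard Young tableau with at most `n` boxes, fuel `n` always suffices. -/
def jdtAux (n : ℕ) (F : Filling) : Filling × Cell :=
  slideIter n (fun c => if c = ((0, 0) : Cell) then 0 else F c) (0, 0)

/-- The jeu de taquin transformation `j` (for tableaux with at most `n` boxes). -/
def jdt (n : ℕ) (F : Filling) : Filling := (jdtAux n F).1

/-- The final position of the hole in the jeu de taquin applied to `F`. -/
def holeEnd (n : ℕ) (F : Filling) : Cell := (jdtAux n F).2

/-- The position of the hole after `s` sliding steps of the jeu de taquin applied
to `F`; the sequence of these positions is the jeu de taquin path of `F`. -/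
def holeAt (F : Filling) (s : ℕ) : Cell :=
  (slideIter s (fun c => if c = ((0, 0) : Cell) then 0 else F c) (0, 0)).2

open Classical in
/-- The position `pos F k` of the entry `k` in the filling `F` (junk value if absent). -/
noncomputable def pos (F : Filling) (k : ℕ) : Cell :=
  if h : ∃ c : Cell, F c = k then h.choose else (0, 0)

/-- The content (`u`-coordinate) of the box of `F` containing the entry `k`:
the column minus the row. -/
noncomputable def content (F : Filling) (k : ℕ) : ℤ :=
  ((pos F k).1 : ℤ) - ((pos F k).2 : ℤ)

/-- `IsStdFilling F a n` : the filling `F` is a standard tableau with entries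
`a+1, …, n`: every such entry occurs in exactly one box, there are no other entries,
the occupied boxes form a Young diagram (a lower set), and the entries strictly
increase from left to right along rows and from bottom to top along columns. -/
def IsStdFilling (F : Filling) (a n : ℕ) : Prop :=
  (∀ k : ℕ, a < k → k ≤ n → ∃! c : Cell, F c = k) ∧
  (∀ c : Cell, F c ≤ n ∧ (F c = 0 ∨ a < F c)) ∧
  (∀ x y : ℕ, F (x + 1, y) ≠ 0 → F (x, y) ≠ 0) ∧
  (∀ x y : ℕ, F (x, y + 1) ≠ 0 → F (x, y) ≠ 0) ∧
  (∀ x y : ℕ, F (x + 1, y) ≠ 0 → F (x, y) < F (x + 1, y)) ∧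
  (∀ x y : ℕ, F (x, y + 1) ≠ 0 → F (x, y) < F (x, y + 1))

/-- The shape of a filling: the set of occupied cells. -/
def shape (F : Filling) : Set Cell := {c : Cell | F c ≠ 0}

/-- A finite set of cells is a Young diagram if it is a lower set. -/
def IsYoung (s : Finset Cell) : Prop :=
  ∀ x y : ℕ, ((x + 1, y) ∈ s → (x, y) ∈ s) ∧ ((x, y + 1) ∈ s → (x, y) ∈ s)

/-- The filling `F` has shape exactly `s`. -/
def HasShape (F : Filling) (s : Finset Cell) : Prop := ∀ c : Cell, c ∈ s ↔ F c ≠ 0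

/-- `F ∈ 𝒯_s` : `F` is a standard Young tableau of shape `s`. -/
def IsSYTof (F : Filling) (s : Finset Cell) : Prop :=
  IsStdFilling F 0 s.card ∧ HasShape F s

/-- The square Young diagram `□_N` of side `N`. -/
def squareDiagram (N : ℕ) : Finset Cell := Finset.range N ×ˢ Finset.range N

/-- `F ∈ 𝒯_{□_N}` : `F` is a standard Young tableau of square shape `□_N`. -/
def IsSquareSYT (N : ℕ) (F : Filling) : Prop := IsSYTof F (squareDiagram N)

/-- The modified jeu de taquin `J` on tableaux with `n` boxes: apply `j`, place a new box
with entry `n+1` at the final position of the hole, then decrease all entries by `1`. -/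
def Jmod (n : ℕ) (F : Filling) : Filling :=
  fun c => (if c = holeEnd n F then n + 1 else jdt n F c) - 1

/-- `IsPieri F n k` : the filling `F`, whose `k` largest entries are
`n-k+1, …, n`, is a Pieri tableau with respect to `k`: the contents of the boxes
containing the `k` largest entries are strictly increasing. -/
noncomputable def IsPieri (F : Filling) (n k : ℕ) : Prop :=
  ∀ p : ℕ, 1 ≤ p → p < k → content F (n - k + p) < content F (n - k + p + 1)

/-- The column into which the value `v` lands when row-inserted into row `y` of `P`
(searching columns `0, …, B`): the first column whose entry is empty or exceeds `v`. -/
def bumpCol (P : Filling) (v y B : ℕ) : ℕ :=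
  (((List.range (B + 1)).find? fun x => decide (P (x, y) = 0 ∨ v < P (x, y))).getD B)

/-- Row insertion: insert the value `v` into row `y` of `P`, bumping to higher rows;
returns the new filling and the cell where a new box was created. -/
def insertRow : ℕ → Filling → ℕ → ℕ → ℕ → Filling × Cell
  | 0, P, _, y, _ => (P, (0, y))
  | fuel + 1, P, v, y, B =>
      let x := bumpCol P v y B
      let w := P (x, y)
      let P' : Filling := fun c => if c = ((x, y) : Cell) then v else P c
      if w = 0 then (P', (x, y)) else insertRow fuel P' w (y + 1) B

/-- One step of the Robinson–Schensted algorithm: insert the value `vi.1` into the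
insertion tableau and record the entry `vi.2` in the newly created box of the
recording tableau. -/
def rsStep (B : ℕ) (PQ : Filling × Filling) (vi : ℕ × ℕ) : Filling × Filling :=
  let res := insertRow (B + 1) PQ.1 vi.1 0 B
  (res.1, fun c => if c = res.2 then vi.2 else PQ.2 c)

/-- The recording tableau `Q(w)` of the Robinson–Schensted row insertion of the
sequence `w`: the entry `i` marks the box created at step `i`. -/
def Qtab (w : List ℕ) : Filling :=
  ((w.zip (List.range' 1 w.length)).foldl (rsStep w.length) (fun _ => 0, fun _ => 0)).2

/-- The lazy parametrization `𝐪_i` of the jeu de taquin path of a tableau `F` with `n`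
boxes: the last box along the jeu de taquin path of `F` whose entry in `F` is `≤ i`. -/
def lazyQ (n : ℕ) (F : Filling) (i : ℕ) : Cell :=
  holeAt F (Nat.findGreatest (fun s => F (holeAt F s) ≤ i) n)

/-- The water configuration `W'(T)` in the single surfer scenario: apply `j` to
`T ∈ 𝒯_{□_N}` `m` times, renumber the entries to `1, …, w+1` (where `w = N²-m-1`)
preserving their order, and remove the box containing the largest entry `w+1`. -/
def waterSingle (N m : ℕ) (T : Filling) : Filling :=
  fun c =>
    if ((jdt (N ^ 2))^[m] T) c - m = N ^ 2 - m then 0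
    else ((jdt (N ^ 2))^[m] T) c - m

/-- The water configuration `W̃'(M)` in the multisurfer scenario: apply `j` to
`M ∈ 𝒯̃_{□_N}` `m+1-k` times, renumber the entries to `1, …, w+k` (where
`w = N²-m-1`) preserving their order, and remove the `k` boxes containing the
entries `w+1, …, w+k`. -/
def waterMulti (N m k : ℕ) (M : Filling) : Filling :=
  fun c =>
    if N ^ 2 - m - 1 < ((jdt (N ^ 2))^[m + 1 - k] M) c - (m + 1 - k) then 0
    else ((jdt (N ^ 2))^[m + 1 - k] M) c - (m + 1 - k)

namespace Stmt9

/-- Move the entry from `q` into the (empty) cell `p`. -/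
def move (F : Filling) (p q : Cell) : Filling :=
  fun c => if c = p then F q else if c = q then 0 else F c

lemma move_p (F : Filling) (p q : Cell) : move F p q p = F q := by simp [move]

lemma move_q (F : Filling) {p q : Cell} (hpq : q ≠ p) : move F p q q = 0 := by
  simp [move, hpq]

lemma move_other (F : Filling) {p q c : Cell} (h1 : c ≠ p) (h2 : c ≠ q) :
    move F p q c = F c := by simp [move, h1, h2]

lemma move_eq_comp (F : Filling) (p q : Cell) (hp : F p = 0) (hpq : p ≠ q) :
    move F p q = F ∘ (Equiv.swap p q) := by
  funext c
  by_cases h1 : c = p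
  · subst h1; simp [move, Equiv.swap_apply_left]
  by_cases h2 : c = q
  · subst h2; simp [move, Equiv.swap_apply_right, hp, Ne.symm hpq]
  · simp [move, h1, h2, Equiv.swap_apply_of_ne_of_ne h1 h2]

lemma uniq_comp (F : Filling) (e : Equiv Cell Cell) (k : ℕ) (h : ∃! c : Cell, F c = k) :
    ∃! c : Cell, F (e c) = k := by
  obtain ⟨c, hc, hu⟩ := h
  refine ⟨e.symm c, by simp [hc], fun y hy => ?_⟩
  have : e y = c := hu _ hy
  rw [← this, Equiv.symm_apply_apply]

lemma shape_move (F : Filling) {p q : Cell} (hp : F p = 0) (hpq : p ≠ q) (hq : F q ≠ 0) :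
    ∀ c : Cell, (move F p q c ≠ 0 ∨ c = q) ↔ (F c ≠ 0 ∨ c = p) := by
  intro c
  by_cases h1 : c = p
  · subst h1; simp [move_p, hq]
  by_cases h2 : c = q
  · subst h2; simp [move_q F (Ne.symm hpq), hq]
  · simp [move_other F h1 h2, h1, h2]

/-- Invariant for a jeu de taquin configuration with a hole at `h`:
entries `b+1,…,n` each occur once, shape together with the hole is a Young
diagram, rows and columns strictly increase, also across the hole. -/
structure Inv (b n : ℕ) (F : Filling) (h : Cell) : Prop where
  hole : F h = 0
  uniq : ∀ k : ℕ, b < k → k ≤ n → ∃! c : Cell, F c = k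
  vals : ∀ c : Cell, F c ≤ n ∧ (F c = 0 ∨ b < F c)
  youngH : ∀ x y : ℕ, (F (x+1,y) ≠ 0 ∨ ((x+1,y) : Cell) = h) → (F (x,y) ≠ 0 ∨ ((x,y) : Cell) = h)
  youngV : ∀ x y : ℕ, (F (x,y+1) ≠ 0 ∨ ((x,y+1) : Cell) = h) → (F (x,y) ≠ 0 ∨ ((x,y) : Cell) = h)
  rowInc : ∀ x y : ℕ, F (x,y) ≠ 0 → F (x+1,y) ≠ 0 → F (x,y) < F (x+1,y)
  colInc : ∀ x y : ℕ, F (x,y) ≠ 0 → F (x,y+1) ≠ 0 → F (x,y) < F (x,y+1)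
  crossH : ∀ x y : ℕ, h = (x+1,y) → F (x,y) ≠ 0 → F (x+2,y) ≠ 0 → F (x,y) < F (x+2,y)
  crossV : ∀ x y : ℕ, h = (x,y+1) → F (x,y) ≠ 0 → F (x,y+2) ≠ 0 → F (x,y) < F (x,y+2)

lemma Inv.val_inj {b n : ℕ} {F : Filling} {h : Cell} (I : Inv b n F h) {c c' : Cell}
    (hc : F c ≠ 0) (e : F c = F c') : c = c' := by
  obtain ⟨d, hd, hu⟩ := I.uniq (F c) ((I.vals c).2.resolve_left hc) (I.vals c).1
  exact (hu c rfl).trans (hu c' e.symm).symm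

lemma Inv.lowerH {b n : ℕ} {F : Filling} {h : Cell} (I : Inv b n F h) :
    ∀ (d x y : ℕ), (F (x+d,y) ≠ 0 ∨ ((x+d,y) : Cell) = h) → (F (x,y) ≠ 0 ∨ ((x,y) : Cell) = h) := by
  intro d
  induction d with
  | zero => intro x y hx; exact hx
  | succ d ih =>
      intro x y hx
      exact ih x y (I.youngH (x+d) y (by rwa [show x+(d+1) = (x+d)+1 by omega] at hx))

lemma Inv.lowerV {b n : ℕ} {F : Filling} {h : Cell} (I : Inv b n F h) :
    ∀ (d x y : ℕ), (F (x,y+d) ≠ 0 ∨ ((x,y+d) : Cell) = h) → (F (x,y) ≠ 0 ∨ ((x,y) : Cell) = h) := by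
  intro d
  induction d with
  | zero => intro x y hx; exact hx
  | succ d ih =>
      intro x y hx
      exact ih x y (I.youngV x (y+d) (by rwa [show y+(d+1) = (y+d)+1 by omega] at hx))

lemma Inv.lower {b n : ℕ} {F : Filling} {h : Cell} (I : Inv b n F h) {x y x' y' : ℕ}
    (hx : x' ≤ x) (hy : y' ≤ y) (H : F (x,y) ≠ 0 ∨ ((x,y) : Cell) = h) :
    F (x',y') ≠ 0 ∨ ((x',y') : Cell) = h := by
  obtain ⟨d, rfl⟩ := Nat.exists_eq_add_of_le hx
  obtain ⟨e, rfl⟩ := Nat.exists_eq_add_of_le hy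
  exact I.lowerV e x' y' (I.lowerH d x' (y'+e) H)

end Stmt9
namespace Stmt9

lemma Inv.bound {b n : ℕ} {F : Filling} {h : Cell} (I : Inv b n F h) : h.1 + h.2 ≤ n - b := by
  classical
  set s : Finset Cell :=
    ((Finset.range h.1).image fun i => (i, h.2)) ∪ ((Finset.range h.2).image fun j => (h.1, j)) with hs
  have hself : F (h.1, h.2) ≠ 0 ∨ ((h.1, h.2) : Cell) = h := Or.inr (Prod.mk.eta)
  have hnz : ∀ c ∈ s, F c ≠ 0 := by
    intro c hc
    simp only [hs, Finset.mem_union, Finset.mem_image, Finset.mem_range] at hc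
    rcases hc with ⟨i, hi, rfl⟩ | ⟨j, hj, rfl⟩
    · rcases I.lower (le_of_lt hi) le_rfl hself with H | H
      · exact H
      · exfalso; have : i = h.1 := by rw [← Prod.mk.eta (p := h)] at H; exact (Prod.mk.injEq _ _ _ _).mp H |>.1
        omega
    · rcases I.lower le_rfl (le_of_lt hj) hself with H | H
      · exact H
      · exfalso; have : j = h.2 := by rw [← Prod.mk.eta (p := h)] at H; exact (Prod.mk.injEq _ _ _ _).mp H |>.2
        omega
  have hcard : s.card = h.1 + h.2 := by
    rw [hs, Finset.card_union_of_disjoint, Finset.card_image_of_injective, Finset.card_image_of_injective,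
      Finset.card_range, Finset.card_range]
    · intro a b hab; simpa using hab
    · intro a b hab; simpa using hab
    · rw [Finset.disjoint_left]
      rintro c hc hc'
      simp only [Finset.mem_image, Finset.mem_range] at hc hc'
      obtain ⟨i, hi, rfl⟩ := hc
      obtain ⟨j, hj, hji⟩ := hc'
      have := (Prod.mk.injEq _ _ _ _).mp hji
      omega
  have hle : s.card ≤ (Finset.Ioc b n).card := by
    apply Finset.card_le_card_of_injOn F
    · intro c hc
      have := hnz c hc
      simp only [Finset.coe_Ioc, Finset.mem_coe, Finset.mem_Ioc, Set.mem_Ioc]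
      exact ⟨(I.vals c).2.resolve_left this, (I.vals c).1⟩
    · intro c hc c' _ e
      exact I.val_inj (hnz c hc) e
  rwa [hcard, Nat.card_Ioc] at hle

end Stmt9
namespace Stmt9

/-- Transpose of a filling. -/
def tr (F : Filling) : Filling := fun c => F (c.2, c.1)

lemma tr_tr (F : Filling) : tr (tr F) = F := by
  funext c; simp [tr]

lemma Inv.trans {b n : ℕ} {F : Filling} {h : Cell} (I : Inv b n F h) :
    Inv b n (tr F) (h.2, h.1) where
  hole := by simpa [tr] using I.hole
  uniq := by
    intro k hk1 hk2
    obtain ⟨c, hc, hu⟩ := I.uniq k hk1 hk2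
    refine ⟨(c.2, c.1), by simpa [tr] using hc, fun y hy => ?_⟩
    have : (y.2, y.1) = c := hu _ hy
    have h1 := (Prod.mk.injEq _ _ _ _).mp this
    exact Prod.ext h1.2 h1.1
  vals := fun c => I.vals _
  youngH := by
    intro x y hx
    have := I.youngV y x (by
      rcases hx with hx | hx
      · exact Or.inl hx
      · right
        have h1 := (Prod.mk.injEq _ _ _ _).mp hx
        rw [← Prod.mk.eta (p := h)]; exact Prod.ext h1.2 h1.1)
    rcases this with H | H
    · exact Or.inl H
    · right
      rw [← Prod.mk.eta (p := h)] at H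
      have h1 := (Prod.mk.injEq _ _ _ _).mp H
      exact Prod.ext h1.2 h1.1
  youngV := by
    intro x y hx
    have := I.youngH y x (by
      rcases hx with hx | hx
      · exact Or.inl hx
      · right
        have h1 := (Prod.mk.injEq _ _ _ _).mp hx
        rw [← Prod.mk.eta (p := h)]; exact Prod.ext h1.2 h1.1)
    rcases this with H | H
    · exact Or.inl H
    · right
      rw [← Prod.mk.eta (p := h)] at H
      have h1 := (Prod.mk.injEq _ _ _ _).mp H
      exact Prod.ext h1.2 h1.1
  rowInc := fun x y hx hy => I.colInc y x hx hy
  colInc := fun x y hx hy => I.rowInc y x hx hy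
  crossH := by
    intro x y hh hx hy
    rw [Prod.ext_iff] at hh
    exact I.crossV y x (by rw [Prod.ext_iff]; exact ⟨hh.2, hh.1⟩) hx hy
  crossV := by
    intro x y hh hx hy
    rw [Prod.ext_iff] at hh
    exact I.crossH y x (by rw [Prod.ext_iff]; exact ⟨hh.2, hh.1⟩) hx hy

lemma tr_move (F : Filling) (p q : Cell) :
    tr (move F p q) = move (tr F) (p.2, p.1) (q.2, q.1) := by
  funext c
  have e1 : (((c.2, c.1) : Cell) = p) ↔ (c = (p.2, p.1)) := by
    rw [Prod.ext_iff, Prod.ext_iff]; exact and_comm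
  have e2 : (((c.2, c.1) : Cell) = q) ↔ (c = (q.2, q.1)) := by
    rw [Prod.ext_iff, Prod.ext_iff]; exact and_comm
  show (if (c.2, c.1) = p then F q else if (c.2, c.1) = q then 0 else F (c.2, c.1)) =
    (if c = (p.2, p.1) then tr F (q.2, q.1) else if c = (q.2, q.1) then 0 else tr F c)
  by_cases hc1 : c = (p.2, p.1)
  · rw [if_pos (e1.mpr hc1), if_pos hc1]; rfl
  · rw [if_neg (fun hh => hc1 (e1.mp hh)), if_neg hc1]
    by_cases hc2 : c = (q.2, q.1)
    · rw [if_pos (e2.mpr hc2), if_pos hc2]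
    · rw [if_neg (fun hh => hc2 (e2.mp hh)), if_neg hc2]; rfl

end Stmt9
namespace Stmt9

lemma cell_ne {a b c d : ℕ} (h : ¬(a = c ∧ b = d)) : ((a,b) : Cell) ≠ (c,d) :=
  fun hh => h ((Prod.mk.injEq _ _ _ _).mp hh)

lemma cell_eq {a b c d : ℕ} (h : ((a,b) : Cell) = (c,d)) : a = c ∧ b = d :=
  (Prod.mk.injEq _ _ _ _).mp h

lemma inv_slide_right {b n : ℕ} {F : Filling} {h1 h2 : ℕ} (I : Inv b n F (h1, h2))
    (hr : F (h1+1, h2) ≠ 0) (hu : F (h1, h2+1) = 0 ∨ F (h1+1, h2) < F (h1, h2+1)) :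
    Inv b n (move F (h1,h2) (h1+1,h2)) (h1+1, h2) := by
  have hpq : ((h1,h2) : Cell) ≠ (h1+1,h2) := cell_ne (by omega)
  have hqp : ((h1+1,h2) : Cell) ≠ (h1,h2) := cell_ne (by omega)
  have hmv : move F (h1,h2) (h1+1,h2) = F ∘ (Equiv.swap (h1,h2) (h1+1,h2)) :=
    move_eq_comp F _ _ I.hole hpq
  have sm := shape_move F I.hole hpq hr
  refine ⟨move_q F hqp, ?_, ?_, ?_, ?_, ?_, ?_, ?_, ?_⟩
  · intro k hk1 hk2; rw [hmv]; exact uniq_comp F _ k (I.uniq k hk1 hk2)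
  · intro c; rw [hmv]; exact I.vals _
  · exact fun x y hx => (sm (x,y)).mpr (I.youngH x y ((sm (x+1,y)).mp hx))
  · exact fun x y hx => (sm (x,y)).mpr (I.youngV x y ((sm (x,y+1)).mp hx))
  · -- rowInc
    intro x y g0 g1
    by_cases e1 : x = h1 ∧ y = h2
    · exfalso
      obtain ⟨rfl, rfl⟩ := e1
      exact g1 (move_q F hqp)
    · by_cases e3 : x = h1 + 1 ∧ y = h2
      · exfalso
        obtain ⟨rfl, rfl⟩ := e3
        exact g0 (move_q F hqp)
      · by_cases e2 : x + 1 = h1 ∧ y = h2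
        · obtain ⟨e2a, rfl⟩ := e2
          subst e2a
          have v0 : move F (x+1,y) (x+2,y) (x,y) = F (x,y) :=
            move_other F (cell_ne (by omega)) (cell_ne (by omega))
          have v1 : move F (x+1,y) (x+2,y) (x+1,y) = F (x+2,y) := move_p F _ _
          rw [v0] at g0 ⊢; rw [v1] at g1 ⊢
          exact I.crossH x y rfl g0 g1
        · have v0 : move F (h1,h2) (h1+1,h2) (x,y) = F (x,y) :=
            move_other F (cell_ne (by omega)) (cell_ne (by omega))
          have v1 : move F (h1,h2) (h1+1,h2) (x+1,y) = F (x+1,y) :=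
            move_other F (cell_ne (by omega)) (cell_ne (by omega))
          rw [v0] at g0 ⊢; rw [v1] at g1 ⊢
          exact I.rowInc x y g0 g1
  · -- colInc
    intro x y g0 g1
    by_cases e1 : x = h1 ∧ y = h2
    · obtain ⟨rfl, rfl⟩ := e1
      have v0 : move F (x,y) (x+1,y) (x,y) = F (x+1,y) := move_p F _ _
      have v1 : move F (x,y) (x+1,y) (x,y+1) = F (x,y+1) :=
        move_other F (cell_ne (by omega)) (cell_ne (by omega))
      rw [v0] at g0 ⊢; rw [v1] at g1 ⊢
      rcases hu with hu | hu
      · exact absurd hu g1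
      · exact hu
    · by_cases e3 : x = h1 + 1 ∧ y = h2
      · exfalso; obtain ⟨rfl, rfl⟩ := e3
        exact g0 (move_q F hqp)
      · by_cases e4 : x = h1 ∧ y + 1 = h2
        · obtain ⟨rfl, e4b⟩ := e4
          subst e4b
          have v0 : move F (x,y+1) (x+1,y+1) (x,y) = F (x,y) :=
            move_other F (cell_ne (by omega)) (cell_ne (by omega))
          have v1 : move F (x,y+1) (x+1,y+1) (x,y+1) = F (x+1,y+1) := move_p F _ _
          rw [v0] at g0 ⊢; rw [v1] at g1 ⊢
          have hf : F (x+1, y) ≠ 0 := by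
            rcases I.youngV (x+1) y (Or.inl hr) with H | H
            · exact H
            · exact absurd (cell_eq H) (by omega)
          exact lt_trans (I.rowInc x y g0 hf) (I.colInc (x+1) y hf hr)
        · by_cases e5 : x = h1 + 1 ∧ y + 1 = h2
          · exfalso
            obtain ⟨rfl, e5b⟩ := e5
            subst e5b
            exact g1 (move_q F hqp)
          · have v0 : move F (h1,h2) (h1+1,h2) (x,y) = F (x,y) :=
              move_other F (cell_ne (by omega)) (cell_ne (by omega))
            have v1 : move F (h1,h2) (h1+1,h2) (x,y+1) = F (x,y+1) :=
              move_other F (cell_ne (by omega)) (cell_ne (by omega))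
            rw [v0] at g0 ⊢; rw [v1] at g1 ⊢
            exact I.colInc x y g0 g1
  · -- crossH
    intro x y hh g0 g1
    obtain ⟨hx, hy⟩ := cell_eq hh
    have hx' : x = h1 := by omega
    subst hx'; subst hy
    have v0 : move F (x,h2) (x+1,h2) (x,h2) = F (x+1,h2) := move_p F _ _
    have v2 : move F (x,h2) (x+1,h2) (x+2,h2) = F (x+2,h2) :=
      move_other F (cell_ne (by omega)) (cell_ne (by omega))
    rw [v0] at g0 ⊢; rw [v2] at g1 ⊢
    exact I.rowInc (x+1) h2 hr g1
  · -- crossV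
    intro x y hh g0 g1
    obtain ⟨hx, hy⟩ := cell_eq hh
    subst hx; subst hy
    have v0 : move F (h1,y+1) (h1+1,y+1) (h1+1,y) = F (h1+1,y) :=
      move_other F (cell_ne (by omega)) (cell_ne (by omega))
    have v2 : move F (h1,y+1) (h1+1,y+1) (h1+1,y+2) = F (h1+1,y+2) :=
      move_other F (cell_ne (by omega)) (cell_ne (by omega))
    rw [v0] at g0 ⊢; rw [v2] at g1 ⊢
    exact lt_trans (I.colInc (h1+1) y g0 hr) (I.colInc (h1+1) (y+1) hr g1)

end Stmt9
namespace Stmt9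

lemma inv_slide_up {b n : ℕ} {F : Filling} {h1 h2 : ℕ} (I : Inv b n F (h1, h2))
    (hu : F (h1, h2+1) ≠ 0) (hr : F (h1+1, h2) = 0 ∨ F (h1, h2+1) < F (h1+1, h2)) :
    Inv b n (move F (h1,h2) (h1,h2+1)) (h1, h2+1) := by
  have I' : Inv b n (tr F) (h2, h1) := I.trans
  have J : Inv b n (move (tr F) (h2,h1) (h2+1,h1)) (h2+1, h1) :=
    inv_slide_right I' hu hr
  have J2 := J.trans
  have e : tr (move (tr F) (h2,h1) (h2+1,h1)) = move F (h1,h2) (h1,h2+1) := by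
    rw [tr_move, tr_tr]
  rw [e] at J2
  exact J2

/-- Entry directly to the left of `h` (0 if none). -/
def lval (F : Filling) (h : Cell) : ℕ := match h with
  | (0, _) => 0
  | (x+1, y) => F (x, y)

/-- Entry directly below `h` (0 if none). -/
def dval (F : Filling) (h : Cell) : ℕ := match h with
  | (_, 0) => 0
  | (x, y+1) => F (x, y)

/-- One reverse sliding step. -/
def rslide (F : Filling) (h : Cell) : Filling × Cell :=
  if dval F h < lval F h then (move F h (h.1 - 1, h.2), (h.1 - 1, h.2))
  else if 0 < dval F h then (move F h (h.1, h.2 - 1), (h.1, h.2 - 1))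
  else (F, h)

/-- Iterated reverse sliding. -/
def rslideIter : ℕ → Filling → Cell → Filling × Cell
  | 0, F, h => (F, h)
  | fuel+1, F, h =>
      if lval F h = 0 ∧ dval F h = 0 then (F, h)
      else rslideIter fuel (rslide F h).1 (rslide F h).2

lemma lval_tr (F : Filling) (x y : ℕ) : lval (tr F) (y, x) = dval F (x, y) := by
  cases y <;> rfl

lemma dval_tr (F : Filling) (x y : ℕ) : dval (tr F) (y, x) = lval F (x, y) := by
  cases x <;> rfl

lemma inv_rslide_left {b n : ℕ} {F : Filling} {h1 h2 : ℕ} (I : Inv b n F (h1+1, h2))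
    (hl : F (h1, h2) ≠ 0) (hd : ∀ y', h2 = y' + 1 → F (h1+1, y') < F (h1, h2)) :
    Inv b n (move F (h1+1,h2) (h1,h2)) (h1, h2) := by
  have hpq : ((h1+1,h2) : Cell) ≠ (h1,h2) := cell_ne (by omega)
  have hqp : ((h1,h2) : Cell) ≠ (h1+1,h2) := cell_ne (by omega)
  have hmv : move F (h1+1,h2) (h1,h2) = F ∘ (Equiv.swap (h1+1,h2) (h1,h2)) :=
    move_eq_comp F _ _ I.hole hpq
  have sm := shape_move F I.hole hpq hl
  refine ⟨move_q F hqp, ?_, ?_, ?_, ?_, ?_, ?_, ?_, ?_⟩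
  · intro k hk1 hk2; rw [hmv]; exact uniq_comp F _ k (I.uniq k hk1 hk2)
  · intro c; rw [hmv]; exact I.vals _
  · exact fun x y hx => (sm (x,y)).mpr (I.youngH x y ((sm (x+1,y)).mp hx))
  · exact fun x y hx => (sm (x,y)).mpr (I.youngV x y ((sm (x,y+1)).mp hx))
  · -- rowInc
    intro x y g0 g1
    by_cases e1 : x = h1 ∧ y = h2
    · exfalso; obtain ⟨rfl, rfl⟩ := e1; exact g0 (move_q F hqp)
    · by_cases e2 : x + 1 = h1 ∧ y = h2
      · exfalso
        have : ((x+1, y) : Cell) = (h1, h2) := by rw [Prod.ext_iff]; exact ⟨e2.1, e2.2⟩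
        rw [this] at g1
        exact g1 (move_q F hqp)
      · by_cases e3 : x = h1 + 1 ∧ y = h2
        · obtain ⟨rfl, rfl⟩ := e3
          have v0 : move F (h1+1,y) (h1,y) (h1+1,y) = F (h1,y) := move_p F _ _
          have v1 : move F (h1+1,y) (h1,y) (h1+2,y) = F (h1+2,y) :=
            move_other F (cell_ne (by omega)) (cell_ne (by omega))
          rw [v0] at g0 ⊢; rw [v1] at g1 ⊢
          exact I.crossH h1 y rfl hl g1
        · have v0 : move F (h1+1,h2) (h1,h2) (x,y) = F (x,y) :=
            move_other F (cell_ne (by omega)) (cell_ne (by omega))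
          have v1 : move F (h1+1,h2) (h1,h2) (x+1,y) = F (x+1,y) :=
            move_other F (cell_ne (by omega)) (cell_ne (by omega))
          rw [v0] at g0 ⊢; rw [v1] at g1 ⊢
          exact I.rowInc x y g0 g1
  · -- colInc
    intro x y g0 g1
    by_cases e1 : x = h1 ∧ y = h2
    · exfalso; obtain ⟨rfl, rfl⟩ := e1; exact g0 (move_q F hqp)
    · by_cases e2 : x = h1 ∧ y + 1 = h2
      · exfalso
        have : ((x, y+1) : Cell) = (h1, h2) := by rw [Prod.ext_iff]; exact ⟨e2.1, e2.2⟩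
        rw [this] at g1
        exact g1 (move_q F hqp)
      · by_cases e3 : x = h1 + 1 ∧ y = h2
        · obtain ⟨rfl, rfl⟩ := e3
          have v0 : move F (h1+1,y) (h1,y) (h1+1,y) = F (h1,y) := move_p F _ _
          have v1 : move F (h1+1,y) (h1,y) (h1+1,y+1) = F (h1+1,y+1) :=
            move_other F (cell_ne (by omega)) (cell_ne (by omega))
          rw [v0] at g0 ⊢; rw [v1] at g1 ⊢
          have hg : F (h1, y+1) ≠ 0 := by
            rcases I.youngH h1 (y+1) (Or.inl g1) with H | H
            · exact H
            · exact absurd (cell_eq H) (by omega)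
          exact lt_trans (I.colInc h1 y hl hg) (I.rowInc h1 (y+1) hg g1)
        · by_cases e4 : x = h1 + 1 ∧ y + 1 = h2
          · obtain ⟨rfl, e4b⟩ := e4
            subst e4b
            have v0 : move F (h1+1,y+1) (h1,y+1) (h1+1,y) = F (h1+1,y) :=
              move_other F (cell_ne (by omega)) (cell_ne (by omega))
            have v1 : move F (h1+1,y+1) (h1,y+1) (h1+1,y+1) = F (h1,y+1) := move_p F _ _
            rw [v0] at g0 ⊢; rw [v1] at g1 ⊢
            exact hd y rfl
          · have v0 : move F (h1+1,h2) (h1,h2) (x,y) = F (x,y) :=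
              move_other F (cell_ne (by omega)) (cell_ne (by omega))
            have v1 : move F (h1+1,h2) (h1,h2) (x,y+1) = F (x,y+1) :=
              move_other F (cell_ne (by omega)) (cell_ne (by omega))
            rw [v0] at g0 ⊢; rw [v1] at g1 ⊢
            exact I.colInc x y g0 g1
  · -- crossH (new hole (h1,h2))
    intro x y hh g0 g1
    obtain ⟨hx, hy⟩ := cell_eq hh
    have hx' : h1 = x + 1 := hx
    subst hy; subst hx'
    have v0 : move F (x+2,h2) (x+1,h2) (x,h2) = F (x,h2) :=
      move_other F (cell_ne (by omega)) (cell_ne (by omega))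
    have v2 : move F (x+2,h2) (x+1,h2) (x+2,h2) = F (x+1,h2) := move_p F _ _
    rw [v0] at g0 ⊢; rw [v2] at g1 ⊢
    exact I.rowInc x h2 g0 hl
  · -- crossV (new hole (h1,h2))
    intro x y hh g0 g1
    obtain ⟨hx, hy⟩ := cell_eq hh
    subst hx; subst hy
    have v0 : move F (h1+1,y+1) (h1,y+1) (h1,y) = F (h1,y) :=
      move_other F (cell_ne (by omega)) (cell_ne (by omega))
    have v2 : move F (h1+1,y+1) (h1,y+1) (h1,y+2) = F (h1,y+2) :=
      move_other F (cell_ne (by omega)) (cell_ne (by omega))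
    rw [v0] at g0 ⊢; rw [v2] at g1 ⊢
    exact lt_trans (I.colInc h1 y g0 hl) (I.colInc h1 (y+1) hl g1)

lemma inv_rslide_down {b n : ℕ} {F : Filling} {h1 h2 : ℕ} (I : Inv b n F (h1, h2+1))
    (hdn : F (h1, h2) ≠ 0) (hlft : ∀ x', h1 = x' + 1 → F (x', h2+1) < F (h1, h2)) :
    Inv b n (move F (h1,h2+1) (h1,h2)) (h1, h2) := by
  have I' : Inv b n (tr F) (h2+1, h1) := I.trans
  have J : Inv b n (move (tr F) (h2+1,h1) (h2,h1)) (h2, h1) :=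
    inv_rslide_left I' hdn (fun y' hy => hlft y' hy)
  have J2 := J.trans
  have e : tr (move (tr F) (h2+1,h1) (h2,h1)) = move F (h1,h2+1) (h1,h2) := by
    rw [tr_move, tr_tr]
  rw [e] at J2
  exact J2

end Stmt9
namespace Stmt9

lemma move_move (F : Filling) {p q : Cell} (hp : F p = 0) (hpq : p ≠ q) :
    move (move F p q) q p = F := by
  funext c
  by_cases h1 : c = q
  · subst h1; rw [move_p, move_p]
  · by_cases h2 : c = p
    · subst h2; rw [move_q (move F c q) hpq, hp]
    · rw [move_other _ h1 h2, move_other _ h2 h1]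

lemma slideIter_terminal {F : Filling} {h : Cell} (fuel : ℕ)
    (ht : F (h.1+1, h.2) = 0 ∧ F (h.1, h.2+1) = 0) : slideIter fuel F h = (F, h) := by
  cases fuel <;> simp [slideIter, ht]

lemma slideIter_succ {F : Filling} {h : Cell} (fuel : ℕ)
    (hnt : ¬(F (h.1+1, h.2) = 0 ∧ F (h.1, h.2+1) = 0)) :
    slideIter (fuel+1) F h = slideIter fuel (slide F h).1 (slide F h).2 := by
  simp [slideIter, hnt]

lemma rslideIter_terminal {F : Filling} {h : Cell} (fuel : ℕ)
    (ht : lval F h = 0 ∧ dval F h = 0) : rslideIter fuel F h = (F, h) := by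
  cases fuel <;> simp [rslideIter, ht]

lemma rslideIter_succ {F : Filling} {h : Cell} (fuel : ℕ)
    (hnt : ¬(lval F h = 0 ∧ dval F h = 0)) :
    rslideIter (fuel+1) F h = rslideIter fuel (rslide F h).1 (rslide F h).2 := by
  simp [rslideIter, hnt]

lemma rterminal_iff {b n : ℕ} {F : Filling} {h : Cell} (I : Inv b n F h) :
    (lval F h = 0 ∧ dval F h = 0) ↔ h = ((0,0) : Cell) := by
  constructor
  · intro ⟨hl, hd⟩
    obtain ⟨x, y⟩ := h
    match x, y with
    | 0, 0 => rfl
    | x+1, y =>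
        exfalso
        have := I.youngH x y (Or.inr rfl)
        rcases this with H | H
        · exact H hl
        · exact absurd (cell_eq H) (by omega)
    | 0, y+1 =>
        exfalso
        have := I.youngV 0 y (Or.inr rfl)
        rcases this with H | H
        · exact H hd
        · exact absurd (cell_eq H) (by omega)
  · rintro rfl; exact ⟨rfl, rfl⟩

lemma slide_right_eq {F : Filling} {h1 h2 : ℕ} (hr : F (h1+1, h2) ≠ 0)
    (hu : F (h1, h2+1) = 0 ∨ F (h1+1, h2) < F (h1, h2+1)) :
    slide F (h1, h2) = (move F (h1,h2) (h1+1,h2), (h1+1, h2)) := by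
  have c1 : ¬(F (h1+1,h2) = 0 ∧ F (h1,h2+1) = 0) := fun hc => hr hc.1
  have c2 : F (h1,h2+1) = 0 ∨ (F (h1+1,h2) ≠ 0 ∧ F (h1+1,h2) < F (h1,h2+1)) := by
    rcases hu with hu | hu
    · exact Or.inl hu
    · exact Or.inr ⟨hr, hu⟩
  simp only [slide, if_neg c1, if_pos c2]
  rfl

lemma slide_up_eq {F : Filling} {h1 h2 : ℕ} (hup : F (h1, h2+1) ≠ 0)
    (hr : F (h1+1, h2) = 0 ∨ F (h1, h2+1) < F (h1+1, h2)) :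
    slide F (h1, h2) = (move F (h1,h2) (h1,h2+1), (h1, h2+1)) := by
  have c1 : ¬(F (h1+1,h2) = 0 ∧ F (h1,h2+1) = 0) := fun hc => hup hc.2
  have c2 : ¬(F (h1,h2+1) = 0 ∨ (F (h1+1,h2) ≠ 0 ∧ F (h1+1,h2) < F (h1,h2+1))) := by
    rintro (hc | ⟨hc1, hc2⟩)
    · exact hup hc
    · rcases hr with hr | hr
      · exact hc1 hr
      · omega
  simp only [slide, if_neg c1, if_neg c2]
  rfl

end Stmt9
namespace Stmt9

lemma step_right_pack {b n : ℕ} {F : Filling} {h1 h2 : ℕ} (I : Inv b n F (h1,h2))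
    (hr : F (h1+1,h2) ≠ 0) (hu : F (h1,h2+1) = 0 ∨ F (h1+1,h2) < F (h1,h2+1)) :
    Inv b n (slide F (h1,h2)).1 (slide F (h1,h2)).2 ∧
    (slide F (h1,h2)).2.1 + (slide F (h1,h2)).2.2 = h1 + h2 + 1 ∧
    (∀ c : Cell, ((slide F (h1,h2)).1 c ≠ 0 ∨ c = (slide F (h1,h2)).2) ↔ (F c ≠ 0 ∨ c = (h1,h2))) ∧
    rslide (slide F (h1,h2)).1 (slide F (h1,h2)).2 = (F, (h1,h2)) ∧
    ¬(lval (slide F (h1,h2)).1 (slide F (h1,h2)).2 = 0 ∧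
      dval (slide F (h1,h2)).1 (slide F (h1,h2)).2 = 0) := by
  rw [slide_right_eq hr hu]
  refine ⟨inv_slide_right I hr hu, by show h1+1+h2 = h1+h2+1; omega,
    shape_move F I.hole (cell_ne (by omega)) hr, ?_, ?_⟩
  · have hl : lval (move F (h1,h2) (h1+1,h2)) (h1+1, h2) = F (h1+1,h2) := by
      show move F (h1,h2) (h1+1,h2) (h1,h2) = _
      rw [move_p]
    have hd : dval (move F (h1,h2) (h1+1,h2)) (h1+1,h2) <
        lval (move F (h1,h2) (h1+1,h2)) (h1+1,h2) := by
      rw [hl]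
      cases h2 with
      | zero => exact Nat.pos_of_ne_zero hr
      | succ y =>
          show move F (h1,y+1) (h1+1,y+1) (h1+1, y) < _
          rw [move_other F (cell_ne (by omega)) (cell_ne (by omega))]
          rcases Nat.eq_zero_or_pos (F (h1+1,y)) with h0 | h0
          · rw [h0]; exact Nat.pos_of_ne_zero hr
          · exact I.colInc (h1+1) y (by omega) hr
    show rslide (move F (h1,h2) (h1+1,h2)) (h1+1, h2) = _
    unfold rslide
    rw [if_pos hd]
    have e : (((h1+1,h2) : Cell).1 - 1, ((h1+1,h2) : Cell).2) = ((h1,h2) : Cell) := by simp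
    rw [e, move_move F I.hole (cell_ne (by omega))]
  · intro hc
    apply hr
    have := hc.1
    show F (h1+1, h2) = 0
    rw [show lval (move F (h1,h2) (h1+1,h2)) (h1+1, h2) = F (h1+1,h2) from by
      show move F (h1,h2) (h1+1,h2) (h1,h2) = _; rw [move_p]] at this
    exact this

lemma step_up_pack {b n : ℕ} {F : Filling} {h1 h2 : ℕ} (I : Inv b n F (h1,h2))
    (hup : F (h1,h2+1) ≠ 0) (hr : F (h1+1,h2) = 0 ∨ F (h1,h2+1) < F (h1+1,h2)) :
    Inv b n (slide F (h1,h2)).1 (slide F (h1,h2)).2 ∧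
    (slide F (h1,h2)).2.1 + (slide F (h1,h2)).2.2 = h1 + h2 + 1 ∧
    (∀ c : Cell, ((slide F (h1,h2)).1 c ≠ 0 ∨ c = (slide F (h1,h2)).2) ↔ (F c ≠ 0 ∨ c = (h1,h2))) ∧
    rslide (slide F (h1,h2)).1 (slide F (h1,h2)).2 = (F, (h1,h2)) ∧
    ¬(lval (slide F (h1,h2)).1 (slide F (h1,h2)).2 = 0 ∧
      dval (slide F (h1,h2)).1 (slide F (h1,h2)).2 = 0) := by
  rw [slide_up_eq hup hr]
  have hdv : dval (move F (h1,h2) (h1,h2+1)) (h1, h2+1) = F (h1,h2+1) := by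
    show move F (h1,h2) (h1,h2+1) (h1,h2) = _
    rw [move_p]
  refine ⟨inv_slide_up I hup hr, by show h1+(h2+1) = h1+h2+1; omega,
    shape_move F I.hole (cell_ne (by omega)) hup, ?_, ?_⟩
  · have hnlt : ¬(dval (move F (h1,h2) (h1,h2+1)) (h1,h2+1) <
        lval (move F (h1,h2) (h1,h2+1)) (h1,h2+1)) := by
      rw [hdv]
      cases h1 with
      | zero => show ¬(_ < 0); omega
      | succ x =>
          show ¬(_ < move F (x+1,h2) (x+1,h2+1) (x, h2+1))
          rw [move_other F (cell_ne (by omega)) (cell_ne (by omega))]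
          rcases Nat.eq_zero_or_pos (F (x,h2+1)) with h0 | h0
          · omega
          · have := I.rowInc x (h2+1) (by omega) hup
            omega
    have hpos : 0 < dval (move F (h1,h2) (h1,h2+1)) (h1,h2+1) := by
      rw [hdv]; exact Nat.pos_of_ne_zero hup
    show rslide (move F (h1,h2) (h1,h2+1)) (h1, h2+1) = _
    unfold rslide
    rw [if_neg hnlt, if_pos hpos]
    have e : (((h1,h2+1) : Cell).1, ((h1,h2+1) : Cell).2 - 1) = ((h1,h2) : Cell) := by simp
    rw [e, move_move F I.hole (cell_ne (by omega))]
  · intro hc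
    apply hup
    have := hc.2
    rw [hdv] at this
    exact this

lemma slide_step {b n : ℕ} {F : Filling} {h1 h2 : ℕ} (I : Inv b n F (h1,h2))
    (hnt : ¬(F (h1+1,h2) = 0 ∧ F (h1,h2+1) = 0)) :
    Inv b n (slide F (h1,h2)).1 (slide F (h1,h2)).2 ∧
    (slide F (h1,h2)).2.1 + (slide F (h1,h2)).2.2 = h1 + h2 + 1 ∧
    (∀ c : Cell, ((slide F (h1,h2)).1 c ≠ 0 ∨ c = (slide F (h1,h2)).2) ↔ (F c ≠ 0 ∨ c = (h1,h2))) ∧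
    rslide (slide F (h1,h2)).1 (slide F (h1,h2)).2 = (F, (h1,h2)) ∧
    ¬(lval (slide F (h1,h2)).1 (slide F (h1,h2)).2 = 0 ∧
      dval (slide F (h1,h2)).1 (slide F (h1,h2)).2 = 0) := by
  by_cases hr0 : F (h1+1,h2) = 0
  · have hu0 : F (h1,h2+1) ≠ 0 := fun hc => hnt ⟨hr0, hc⟩
    exact step_up_pack I hu0 (Or.inl hr0)
  · by_cases hu0 : F (h1,h2+1) = 0
    · exact step_right_pack I hr0 (Or.inl hu0)
    · have hne : F (h1+1,h2) ≠ F (h1,h2+1) := by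
        intro e
        exact absurd (cell_eq (I.val_inj hr0 e)) (by omega)
      rcases lt_or_gt_of_ne hne with hlt | hgt
      · exact step_right_pack I hr0 (Or.inr hlt)
      · exact step_up_pack I hu0 (Or.inr hgt)

end Stmt9
namespace Stmt9

lemma rstep_left_pack {b n : ℕ} {F : Filling} {h1 h2 : ℕ} (I : Inv b n F (h1+1,h2))
    (hl : F (h1,h2) ≠ 0) (hd : dval F (h1+1,h2) < F (h1,h2)) :
    Inv b n (rslide F (h1+1,h2)).1 (rslide F (h1+1,h2)).2 ∧
    (rslide F (h1+1,h2)).2.1 + (rslide F (h1+1,h2)).2.2 + 1 = (h1+1) + h2 ∧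
    (∀ c : Cell, ((rslide F (h1+1,h2)).1 c ≠ 0 ∨ c = (rslide F (h1+1,h2)).2) ↔
      (F c ≠ 0 ∨ c = (h1+1,h2))) ∧
    slide (rslide F (h1+1,h2)).1 (rslide F (h1+1,h2)).2 = (F, (h1+1,h2)) ∧
    ¬((rslide F (h1+1,h2)).1 ((rslide F (h1+1,h2)).2.1 + 1, (rslide F (h1+1,h2)).2.2) = 0 ∧
      (rslide F (h1+1,h2)).1 ((rslide F (h1+1,h2)).2.1, (rslide F (h1+1,h2)).2.2 + 1) = 0) := by
  have hd' : dval F (h1+1,h2) < lval F (h1+1,h2) := hd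
  have e1 : rslide F (h1+1,h2) = (move F (h1+1,h2) (h1,h2), (h1,h2)) := by
    unfold rslide
    rw [if_pos hd']
    have e : (((h1+1,h2) : Cell).1 - 1, ((h1+1,h2) : Cell).2) = ((h1,h2) : Cell) := by simp
    rw [e]
  rw [e1]
  have hinv : Inv b n (move F (h1+1,h2) (h1,h2)) (h1,h2) := by
    apply inv_rslide_left I hl
    intro y' hy
    subst hy
    exact hd
  have hrn : move F (h1+1,h2) (h1,h2) (h1+1, h2) = F (h1,h2) := move_p F _ _
  refine ⟨hinv, by show h1+h2+1 = (h1+1)+h2; omega,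
    shape_move F I.hole (cell_ne (by omega)) hl, ?_, ?_⟩
  · have hg : move F (h1+1,h2) (h1,h2) (h1, h2+1) = F (h1, h2+1) :=
      move_other F (cell_ne (by omega)) (cell_ne (by omega))
    have hne : move F (h1+1,h2) (h1,h2) (h1+1, h2) ≠ 0 := by rw [hrn]; exact hl
    have hcond : move F (h1+1,h2) (h1,h2) (h1, h2+1) = 0 ∨
        move F (h1+1,h2) (h1,h2) (h1+1, h2) < move F (h1+1,h2) (h1,h2) (h1, h2+1) := by
      rw [hg, hrn]
      rcases Nat.eq_zero_or_pos (F (h1,h2+1)) with h0 | h0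
      · exact Or.inl h0
      · exact Or.inr (I.colInc h1 h2 hl (by omega))
    rw [slide_right_eq hne hcond, move_move F I.hole (cell_ne (by omega))]
  · intro hc
    have h0 : move F (h1+1,h2) (h1,h2) (h1+1, h2) = 0 := hc.1
    rw [hrn] at h0
    exact hl h0

lemma rstep_down_pack {b n : ℕ} {F : Filling} {h1 h2 : ℕ} (I : Inv b n F (h1,h2+1))
    (hdn : F (h1,h2) ≠ 0) (hlv : lval F (h1,h2+1) = 0 ∨ lval F (h1,h2+1) < F (h1,h2)) :
    Inv b n (rslide F (h1,h2+1)).1 (rslide F (h1,h2+1)).2 ∧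
    (rslide F (h1,h2+1)).2.1 + (rslide F (h1,h2+1)).2.2 + 1 = h1 + (h2+1) ∧
    (∀ c : Cell, ((rslide F (h1,h2+1)).1 c ≠ 0 ∨ c = (rslide F (h1,h2+1)).2) ↔
      (F c ≠ 0 ∨ c = (h1,h2+1))) ∧
    slide (rslide F (h1,h2+1)).1 (rslide F (h1,h2+1)).2 = (F, (h1,h2+1)) ∧
    ¬((rslide F (h1,h2+1)).1 ((rslide F (h1,h2+1)).2.1 + 1, (rslide F (h1,h2+1)).2.2) = 0 ∧
      (rslide F (h1,h2+1)).1 ((rslide F (h1,h2+1)).2.1, (rslide F (h1,h2+1)).2.2 + 1) = 0) := by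
  have hdv : dval F (h1,h2+1) = F (h1,h2) := rfl
  have hnlt : ¬(dval F (h1,h2+1) < lval F (h1,h2+1)) := by
    rcases hlv with h0 | h0
    · rw [h0]; omega
    · rw [hdv]; omega
  have hpos : 0 < dval F (h1,h2+1) := by rw [hdv]; exact Nat.pos_of_ne_zero hdn
  have e1 : rslide F (h1,h2+1) = (move F (h1,h2+1) (h1,h2), (h1,h2)) := by
    unfold rslide
    rw [if_neg hnlt, if_pos hpos]
    have e : (((h1,h2+1) : Cell).1, ((h1,h2+1) : Cell).2 - 1) = ((h1,h2) : Cell) := by simp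
    rw [e]
  rw [e1]
  have hinv : Inv b n (move F (h1,h2+1) (h1,h2)) (h1,h2) := by
    apply inv_rslide_down I hdn
    intro x' hx
    subst hx
    have hlv' : lval F (x'+1,h2+1) = F (x', h2+1) := rfl
    rcases hlv with h0 | h0
    · rw [hlv'] at h0
      rw [h0]
      exact Nat.pos_of_ne_zero hdn
    · rw [hlv'] at h0
      exact h0
  have hun : move F (h1,h2+1) (h1,h2) (h1, h2+1) = F (h1,h2) := move_p F _ _
  refine ⟨hinv, by show h1+h2+1 = h1+(h2+1); omega,
    shape_move F I.hole (cell_ne (by omega)) hdn, ?_, ?_⟩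
  · have hg : move F (h1,h2+1) (h1,h2) (h1+1, h2) = F (h1+1, h2) :=
      move_other F (cell_ne (by omega)) (cell_ne (by omega))
    have hne : move F (h1,h2+1) (h1,h2) (h1, h2+1) ≠ 0 := by rw [hun]; exact hdn
    have hcond : move F (h1,h2+1) (h1,h2) (h1+1, h2) = 0 ∨
        move F (h1,h2+1) (h1,h2) (h1, h2+1) < move F (h1,h2+1) (h1,h2) (h1+1, h2) := by
      rw [hg, hun]
      rcases Nat.eq_zero_or_pos (F (h1+1,h2)) with h0 | h0
      · exact Or.inl h0
      · exact Or.inr (I.rowInc h1 h2 hdn (by omega))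
    rw [slide_up_eq hne hcond, move_move F I.hole (cell_ne (by omega))]
  · intro hc
    have h0 : move F (h1,h2+1) (h1,h2) (h1, h2+1) = 0 := hc.2
    rw [hun] at h0
    exact hdn h0

lemma rslide_step {b n : ℕ} {F : Filling} {h1 h2 : ℕ} (I : Inv b n F (h1,h2))
    (hnt : ¬(lval F (h1,h2) = 0 ∧ dval F (h1,h2) = 0)) :
    Inv b n (rslide F (h1,h2)).1 (rslide F (h1,h2)).2 ∧
    (rslide F (h1,h2)).2.1 + (rslide F (h1,h2)).2.2 + 1 = h1 + h2 ∧
    (∀ c : Cell, ((rslide F (h1,h2)).1 c ≠ 0 ∨ c = (rslide F (h1,h2)).2) ↔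
      (F c ≠ 0 ∨ c = (h1,h2))) ∧
    slide (rslide F (h1,h2)).1 (rslide F (h1,h2)).2 = (F, (h1,h2)) ∧
    ¬((rslide F (h1,h2)).1 ((rslide F (h1,h2)).2.1 + 1, (rslide F (h1,h2)).2.2) = 0 ∧
      (rslide F (h1,h2)).1 ((rslide F (h1,h2)).2.1, (rslide F (h1,h2)).2.2 + 1) = 0) := by
  by_cases hlt : dval F (h1,h2) < lval F (h1,h2)
  · -- left move; h1 must be positive
    cases h1 with
    | zero => exact absurd hlt (by show ¬(_ < 0); omega)
    | succ x =>
        have hl : F (x, h2) ≠ 0 := by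
          have : lval F (x+1,h2) = F (x,h2) := rfl
          rw [this] at hlt
          omega
        exact rstep_left_pack I hl hlt
  · cases h2 with
    | zero =>
        exfalso
        apply hnt
        constructor
        · by_contra hl0
          have hd0 : dval F (h1,0) = 0 := rfl
          rw [hd0] at hlt
          omega
        · rfl
    | succ y =>
        have hdn : F (h1, y) ≠ 0 := by
          intro h0
          apply hnt
          have hd0 : dval F (h1,y+1) = F (h1,y) := rfl
          constructor
          · by_contra hl0
            rw [hd0, h0] at hlt
            omega
          · rw [hd0, h0]
        apply rstep_down_pack I hdn
        have hd0 : dval F (h1,y+1) = F (h1,y) := rfl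
        rcases Nat.eq_zero_or_pos (lval F (h1,y+1)) with h0 | h0
        · exact Or.inl h0
        · right
          have hle : lval F (h1,y+1) ≤ F (h1,y) := by rw [← hd0]; omega
          rcases Nat.lt_or_ge (lval F (h1,y+1)) (F (h1,y)) with hgood | hbad
          · exact hgood
          · exfalso
            have heq : lval F (h1,y+1) = F (h1,y) := by omega
            cases h1 with
            | zero =>
                have : lval F (0,y+1) = 0 := rfl
                omega
            | succ x =>
                have hlv' : lval F (x+1,y+1) = F (x,y+1) := rfl
                rw [hlv'] at heq h0
                have := I.val_inj (by omega : F (x,y+1) ≠ 0) heq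
                exact absurd (cell_eq this) (by omega)
  
end Stmt9
namespace Stmt9

lemma terminal_of_bound {b n : ℕ} {F : Filling} {h : Cell} (I : Inv b n F h)
    (hb : n - b ≤ h.1 + h.2) : F (h.1+1, h.2) = 0 ∧ F (h.1, h.2+1) = 0 := by
  obtain ⟨h1, h2⟩ := h
  by_contra hnt
  obtain ⟨I', hsum, -, -, -⟩ := slide_step I hnt
  have := I'.bound
  simp only at hb
  omega

lemma forward_spec {b n : ℕ} : ∀ (fuel : ℕ) (F : Filling) (h : Cell), Inv b n F h →
    n - b ≤ fuel + (h.1 + h.2) →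
    Inv b n (slideIter fuel F h).1 (slideIter fuel F h).2 ∧
    ((slideIter fuel F h).1 ((slideIter fuel F h).2.1 + 1, (slideIter fuel F h).2.2) = 0 ∧
     (slideIter fuel F h).1 ((slideIter fuel F h).2.1, (slideIter fuel F h).2.2 + 1) = 0) ∧
    (∀ c : Cell, ((slideIter fuel F h).1 c ≠ 0 ∨ c = (slideIter fuel F h).2) ↔ (F c ≠ 0 ∨ c = h)) := by
  intro fuel
  induction fuel with
  | zero =>
      intro F h I hb
      have ht : F (h.1+1, h.2) = 0 ∧ F (h.1, h.2+1) = 0 := terminal_of_bound I (by omega)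
      exact ⟨I, ht, fun c => Iff.rfl⟩
  | succ fuel ih =>
      intro F h I hb
      obtain ⟨h1, h2⟩ := h
      by_cases ht : F (h1+1, h2) = 0 ∧ F (h1, h2+1) = 0
      · rw [slideIter_terminal _ ht]
        exact ⟨I, ht, fun c => Iff.rfl⟩
      · rw [slideIter_succ _ ht]
        obtain ⟨I', hsum, hsh, -, -⟩ := slide_step I ht
        simp only at hb
        obtain ⟨J, Jt, Jsh⟩ := ih _ _ I' (by omega)
        exact ⟨J, Jt, fun c => (Jsh c).trans (hsh c)⟩

lemma backward_spec {b n : ℕ} : ∀ (fuel : ℕ) (F : Filling) (h : Cell), Inv b n F h →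
    h.1 + h.2 ≤ fuel →
    Inv b n (rslideIter fuel F h).1 (rslideIter fuel F h).2 ∧
    (rslideIter fuel F h).2 = ((0,0) : Cell) ∧
    (∀ c : Cell, ((rslideIter fuel F h).1 c ≠ 0 ∨ c = (rslideIter fuel F h).2) ↔ (F c ≠ 0 ∨ c = h)) := by
  intro fuel
  induction fuel with
  | zero =>
      intro F h I hb
      have : h = ((0,0) : Cell) := by
        obtain ⟨h1, h2⟩ := h
        simp only at hb
        simp only [Prod.mk.injEq]
        omega
      exact ⟨I, this, fun c => Iff.rfl⟩
  | succ fuel ih =>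
      intro F h I hb
      obtain ⟨h1, h2⟩ := h
      by_cases ht : lval F (h1,h2) = 0 ∧ dval F (h1,h2) = 0
      · rw [rslideIter_terminal _ ht]
        exact ⟨I, (rterminal_iff I).mp ht, fun c => Iff.rfl⟩
      · rw [rslideIter_succ _ ht]
        obtain ⟨I', hsum, hsh, -, -⟩ := rslide_step I ht
        simp only at hb
        obtain ⟨J, Jt, Jsh⟩ := ih _ _ I' (by omega)
        exact ⟨J, Jt, fun c => (Jsh c).trans (hsh c)⟩

lemma forward_eq {b n : ℕ} : ∀ (f f' : ℕ) (F : Filling) (h : Cell), Inv b n F h →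
    n - b ≤ f + (h.1 + h.2) → n - b ≤ f' + (h.1 + h.2) →
    slideIter f F h = slideIter f' F h := by
  intro f
  induction f with
  | zero =>
      intro f' F h I hb hb'
      have ht : F (h.1+1, h.2) = 0 ∧ F (h.1, h.2+1) = 0 := terminal_of_bound I (by omega)
      rw [slideIter_terminal _ ht, slideIter_terminal _ ht]
  | succ f ih =>
      intro f' F h I hb hb'
      obtain ⟨h1, h2⟩ := h
      simp only at hb hb'
      by_cases ht : F (h1+1, h2) = 0 ∧ F (h1, h2+1) = 0
      · rw [slideIter_terminal _ ht, slideIter_terminal _ ht]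
      · obtain ⟨I', hsum, -, -, -⟩ := slide_step I ht
        have hbd := I'.bound
        have hf' : f' ≠ 0 := by omega
        obtain ⟨f'', rfl⟩ := Nat.exists_eq_succ_of_ne_zero hf'
        rw [slideIter_succ _ ht, slideIter_succ _ ht]
        exact ih f'' _ _ I' (by omega) (by omega)

lemma backward_eq {b n : ℕ} : ∀ (f f' : ℕ) (F : Filling) (h : Cell), Inv b n F h →
    h.1 + h.2 ≤ f → h.1 + h.2 ≤ f' →
    rslideIter f F h = rslideIter f' F h := by
  intro f
  induction f with
  | zero =>
      intro f' F h I hb hb'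
      obtain ⟨h1, h2⟩ := h
      simp only at hb
      have e1 : h1 = 0 := by omega
      have e2 : h2 = 0 := by omega
      subst e1; subst e2
      have hterm : lval F ((0,0) : Cell) = 0 ∧ dval F ((0,0) : Cell) = 0 := ⟨rfl, rfl⟩
      rw [rslideIter_terminal _ hterm, rslideIter_terminal _ hterm]
  | succ f ih =>
      intro f' F h I hb hb'
      obtain ⟨h1, h2⟩ := h
      simp only at hb hb'
      by_cases ht : lval F (h1,h2) = 0 ∧ dval F (h1,h2) = 0
      · rw [rslideIter_terminal _ ht, rslideIter_terminal _ ht]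
      · obtain ⟨I', hsum, -, -, -⟩ := rslide_step I ht
        have hpos : 1 ≤ h1 + h2 := by
          by_contra h0
          apply ht
          have e1 : h1 = 0 := by omega
          have e2 : h2 = 0 := by omega
          subst e1; subst e2
          exact ⟨rfl, rfl⟩
        obtain ⟨f'', rfl⟩ := Nat.exists_eq_succ_of_ne_zero (by omega : f' ≠ 0)
        rw [rslideIter_succ _ ht, rslideIter_succ _ ht]
        exact ih f'' _ _ I' (by omega) (by omega)

lemma back_forward {b n : ℕ} : ∀ (fuel : ℕ) (F : Filling) (h : Cell), Inv b n F h →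
    rslideIter n (slideIter fuel F h).1 (slideIter fuel F h).2 = rslideIter n F h := by
  intro fuel
  induction fuel with
  | zero => intro F h I; rfl
  | succ fuel ih =>
      intro F h I
      obtain ⟨h1, h2⟩ := h
      by_cases ht : F (h1+1, h2) = 0 ∧ F (h1, h2+1) = 0
      · rw [slideIter_terminal _ ht]
      · rw [slideIter_succ _ ht]
        obtain ⟨I', hsum, -, hinv, hnt'⟩ := slide_step I ht
        rw [ih _ _ I']
        have hn : n ≠ 0 := by
          rcases not_and_or.mp ht with hr | hu
          · have v1 := (I.vals (h1+1,h2)).1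
            have v2 := (I.vals (h1+1,h2)).2
            omega
          · have v1 := (I.vals (h1,h2+1)).1
            have v2 := (I.vals (h1,h2+1)).2
            omega
        obtain ⟨n', rfl⟩ := Nat.exists_eq_succ_of_ne_zero hn
        rw [rslideIter_succ _ hnt', hinv]
        have hb := I'.bound
        exact backward_eq n' (n'+1) F (h1,h2) I (by omega) (by omega)

lemma forward_backward {b n : ℕ} : ∀ (fuel : ℕ) (F : Filling) (h : Cell), Inv b n F h →
    slideIter n (rslideIter fuel F h).1 (rslideIter fuel F h).2 = slideIter n F h := by
  intro fuel
  induction fuel with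
  | zero => intro F h I; rfl
  | succ fuel ih =>
      intro F h I
      obtain ⟨h1, h2⟩ := h
      by_cases ht : lval F (h1,h2) = 0 ∧ dval F (h1,h2) = 0
      · rw [rslideIter_terminal _ ht]
      · rw [rslideIter_succ _ ht]
        obtain ⟨I', hsum, -, hinv, hnt'⟩ := rslide_step I ht
        rw [ih _ _ I']
        have hn : n ≠ 0 := by
          rcases not_and_or.mp ht with hr | hu
          · cases h1 with
            | zero => exact absurd rfl hr
            | succ x =>
                have v1 := (I.vals (x,h2)).1
                have v2 := (I.vals (x,h2)).2
                have hlv : lval F (x+1,h2) = F (x,h2) := rfl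
                omega
          · cases h2 with
            | zero => exact absurd rfl hu
            | succ y =>
                have v1 := (I.vals (h1,y)).1
                have v2 := (I.vals (h1,y)).2
                have hdv : dval F (h1,y+1) = F (h1,y) := rfl
                omega
        obtain ⟨n', rfl⟩ := Nat.exists_eq_succ_of_ne_zero hn
        rw [slideIter_succ _ hnt', hinv]
        have hpos : 1 ≤ h1 + h2 := by
          by_contra h0
          apply ht
          have e1 : h1 = 0 := by omega
          have e2 : h2 = 0 := by omega
          subst e1; subst e2
          exact ⟨rfl, rfl⟩
        have hb := I.bound
        exact forward_eq n' (n'+1) F (h1,h2) I (by omega) (by omega)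

end Stmt9
namespace Stmt9

lemma std_min {F : Filling} {a n : ℕ} (hF : IsStdFilling F a n) (han : a < n) :
    F ((0,0) : Cell) = a + 1 := by
  obtain ⟨uniq, vals, yH, yV, rI, cI⟩ := hF
  obtain ⟨c, hc, hu⟩ := uniq (a+1) (by omega) (by omega)
  obtain ⟨x, y⟩ := c
  match x, y with
  | 0, 0 => exact hc
  | x+1, y =>
      exfalso
      have h1 : F (x+1, y) ≠ 0 := by rw [hc]; omega
      have h0 : F (x, y) ≠ 0 := yH x y h1
      have hlt := rI x y h1
      rcases (vals (x,y)).2 with h | h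
      · exact h0 h
      · rw [hc] at hlt; omega
  | 0, y+1 =>
      exfalso
      have h1 : F (0, y+1) ≠ 0 := by rw [hc]; omega
      have h0 : F (0, y) ≠ 0 := yV 0 y h1
      have hlt := cI 0 y h1
      rcases (vals (0,y)).2 with h | h
      · exact h0 h
      · rw [hc] at hlt; omega

lemma inv_of_std {F : Filling} {a n : ℕ} (hF : IsStdFilling F a n) (han : a < n) :
    Inv (a+1) n (fun c => if c = ((0,0) : Cell) then 0 else F c) ((0,0) : Cell) := by
  have hmin := std_min hF han
  obtain ⟨uniq, vals, yH, yV, rI, cI⟩ := hF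
  refine ⟨if_pos rfl, ?_, ?_, ?_, ?_, ?_, ?_, ?_, ?_⟩
  · intro k hk1 hk2
    obtain ⟨c, hc, hu⟩ := uniq k (by omega) hk2
    have hc0 : c ≠ ((0,0) : Cell) := by
      intro e; subst e; rw [hmin] at hc; omega
    refine ⟨c, ?_, fun y hy => ?_⟩
    · show (if c = ((0,0) : Cell) then 0 else F c) = k
      rw [if_neg hc0]; exact hc
    · have hy' : (if y = ((0,0) : Cell) then 0 else F y) = k := hy
      by_cases hy0 : y = ((0,0) : Cell)
      · rw [if_pos hy0] at hy'; omega
      · rw [if_neg hy0] at hy'; exact hu y hy' 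
  · intro c
    by_cases hc0 : c = ((0,0) : Cell)
    · rw [if_pos hc0]; exact ⟨Nat.zero_le n, Or.inl rfl⟩
    · rw [if_neg hc0]
      refine ⟨(vals c).1, ?_⟩
      rcases (vals c).2 with h | h
      · exact Or.inl h
      · right
        have : F c ≠ a + 1 := by
          intro e
          obtain ⟨c', hc', hu'⟩ := uniq (a+1) (by omega) (by omega)
          exact hc0 ((hu' c e).trans (hu' ((0,0) : Cell) hmin).symm)
        omega
  · intro x y hx
    have h1 : F (x+1, y) ≠ 0 := by
      rcases hx with hx | hx
      · intro e
        apply hx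
        by_cases h0 : ((x+1,y) : Cell) = ((0,0) : Cell)
        · rw [if_pos h0]
        · rw [if_neg h0]; exact e
      · exact absurd (cell_eq hx) (by omega)
    have h0 := yH x y h1
    by_cases hc0 : ((x,y) : Cell) = ((0,0) : Cell)
    · exact Or.inr hc0
    · left; rw [if_neg hc0]; exact h0
  · intro x y hx
    have h1 : F (x, y+1) ≠ 0 := by
      rcases hx with hx | hx
      · intro e
        apply hx
        by_cases h0 : ((x,y+1) : Cell) = ((0,0) : Cell)
        · rw [if_pos h0]
        · rw [if_neg h0]; exact e
      · exact absurd (cell_eq hx) (by omega)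
    have h0 := yV x y h1
    by_cases hc0 : ((x,y) : Cell) = ((0,0) : Cell)
    · exact Or.inr hc0
    · left; rw [if_neg hc0]; exact h0
  · intro x y g0 g1
    by_cases hc0 : ((x,y) : Cell) = ((0,0) : Cell)
    · rw [if_pos hc0] at g0; omega
    · by_cases hc1 : ((x+1,y) : Cell) = ((0,0) : Cell)
      · rw [if_pos hc1] at g1; omega
      · rw [if_neg hc0] at g0 ⊢
        rw [if_neg hc1] at g1 ⊢
        exact rI x y g1
  · intro x y g0 g1
    by_cases hc0 : ((x,y) : Cell) = ((0,0) : Cell)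
    · rw [if_pos hc0] at g0; omega
    · by_cases hc1 : ((x,y+1) : Cell) = ((0,0) : Cell)
      · rw [if_pos hc1] at g1; omega
      · rw [if_neg hc0] at g0 ⊢
        rw [if_neg hc1] at g1 ⊢
        exact cI x y g1
  · intro x y hh
    exact absurd (cell_eq hh.symm) (by omega)
  · intro x y hh
    exact absurd (cell_eq hh.symm) (by omega)

lemma std_of_inv {b n : ℕ} {F : Filling} {h : Cell} (I : Inv b n F h)
    (ht1 : F (h.1+1, h.2) = 0) (ht2 : F (h.1, h.2+1) = 0) : IsStdFilling F b n := by
  have yH : ∀ x y : ℕ, F (x+1, y) ≠ 0 → F (x, y) ≠ 0 := by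
    intro x y hx
    rcases I.youngH x y (Or.inl hx) with H | H
    · exact H
    · exfalso
      rw [← Prod.mk.eta (p := h)] at H
      obtain ⟨rfl, rfl⟩ := cell_eq H
      exact hx ht1
  have yV : ∀ x y : ℕ, F (x, y+1) ≠ 0 → F (x, y) ≠ 0 := by
    intro x y hx
    rcases I.youngV x y (Or.inl hx) with H | H
    · exact H
    · exfalso
      rw [← Prod.mk.eta (p := h)] at H
      obtain ⟨rfl, rfl⟩ := cell_eq H
      exact hx ht2
  exact ⟨I.uniq, I.vals, yH, yV,
    fun x y hx => I.rowInc x y (yH x y hx) hx,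
    fun x y hx => I.colInc x y (yV x y hx) hx⟩

/-- Reverse jeu de taquin: slide backwards from the outer corner `c`, then put the
entry `b` into the vacated corner `(0,0)`. -/
def rjdt (b n : ℕ) (G : Filling) (c : Cell) : Filling :=
  fun x => if x = ((0,0) : Cell) then b else (rslideIter n G c).1 x

end Stmt9
namespace Stmt9

lemma jdt_spec {a n : ℕ} {T : Filling} (hT : IsStdFilling T a n) (han : a < n) :
    IsStdFilling (jdt n T) (a+1) n ∧
    (∀ c : Cell, ((jdt n T) c ≠ 0 ∨ c = holeEnd n T) ↔ T c ≠ 0) ∧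
    jdt n T (holeEnd n T) = 0 ∧
    jdt n T ((holeEnd n T).1 + 1, (holeEnd n T).2) = 0 ∧
    jdt n T ((holeEnd n T).1, (holeEnd n T).2 + 1) = 0 ∧
    (∀ x y : ℕ, holeEnd n T = ((x+1,y) : Cell) → jdt n T (x,y) ≠ 0) ∧
    (∀ x y : ℕ, holeEnd n T = ((x,y+1) : Cell) → jdt n T (x,y) ≠ 0) ∧
    rjdt (a+1) n (jdt n T) (holeEnd n T) = T := by
  have I0 := inv_of_std hT han
  have spec := forward_spec (b := a+1) n (fun c => if c = ((0,0) : Cell) then 0 else T c)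
    ((0,0) : Cell) I0 (by show n - (a+1) ≤ n + (0 + 0); omega)
  have ej1 : (slideIter n (fun c => if c = ((0,0) : Cell) then 0 else T c) ((0,0):Cell)).1
      = jdt n T := rfl
  have ej2 : (slideIter n (fun c => if c = ((0,0) : Cell) then 0 else T c) ((0,0):Cell)).2
      = holeEnd n T := rfl
  rw [ej1, ej2] at spec
  obtain ⟨J, ⟨Jt1, Jt2⟩, Jsh⟩ := spec
  refine ⟨std_of_inv J Jt1 Jt2, ?_, J.hole, Jt1, Jt2, ?_, ?_, ?_⟩
  · intro c
    refine (Jsh c).trans ?_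
    by_cases hc0 : c = ((0,0) : Cell)
    · subst hc0
      show ((if ((0,0) : Cell) = ((0,0) : Cell) then 0 else T ((0,0) : Cell)) ≠ 0 ∨
        ((0,0) : Cell) = ((0,0) : Cell)) ↔ T ((0,0) : Cell) ≠ 0
      rw [if_pos rfl]
      constructor
      · intro _; rw [std_min hT han]; omega
      · intro _; exact Or.inr rfl
    · show ((if c = ((0,0) : Cell) then 0 else T c) ≠ 0 ∨ c = ((0,0) : Cell)) ↔ T c ≠ 0
      rw [if_neg hc0]
      constructor
      · rintro (h | h)
        · exact h
        · exact absurd h hc0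
      · exact Or.inl
  · intro x y hE
    rcases J.youngH x y (Or.inr hE.symm) with H | H
    · exact H
    · rw [hE] at H; exact absurd (cell_eq H) (by omega)
  · intro x y hE
    rcases J.youngV x y (Or.inr hE.symm) with H | H
    · exact H
    · rw [hE] at H; exact absurd (cell_eq H) (by omega)
  · have hbf : rslideIter n (jdt n T) (holeEnd n T) =
        rslideIter n (fun c => if c = ((0,0) : Cell) then 0 else T c) ((0,0) : Cell) :=
      back_forward (b := a+1) (n := n) n _ ((0,0) : Cell) I0
    funext x
    show (if x = ((0,0) : Cell) then a+1 else (rslideIter n (jdt n T) (holeEnd n T)).1 x) = T x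
    rw [hbf, rslideIter_terminal (F := fun c => if c = ((0,0) : Cell) then 0 else T c)
      (h := ((0,0) : Cell)) n ⟨rfl, rfl⟩]
    by_cases hx : x = ((0,0) : Cell)
    · rw [if_pos hx, hx, std_min hT han]
    · show (if x = ((0,0) : Cell) then a+1 else (if x = ((0,0) : Cell) then 0 else T x)) = T x
      rw [if_neg hx, if_neg hx]

lemma rjdt_spec {b n : ℕ} {U : Filling} {c : Cell} (hU : IsStdFilling U b n)
    (hb : 1 ≤ b) (hbn : b ≤ n)
    (hc0 : U c = 0) (hcr : U (c.1+1, c.2) = 0) (hcu : U (c.1, c.2+1) = 0)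
    (hl : ∀ x y : ℕ, c = ((x+1,y) : Cell) → U (x,y) ≠ 0)
    (hd : ∀ x y : ℕ, c = ((x,y+1) : Cell) → U (x,y) ≠ 0) :
    IsStdFilling (rjdt b n U c) (b-1) n ∧
    (∀ x : Cell, rjdt b n U c x ≠ 0 ↔ (U x ≠ 0 ∨ x = c)) ∧
    jdt n (rjdt b n U c) = U ∧ holeEnd n (rjdt b n U c) = c := by
  obtain ⟨uniq, vals, yH, yV, rI, cI⟩ := hU
  have I : Inv b n U c := by
    refine ⟨hc0, uniq, vals, ?_, ?_, fun x y g0 g1 => rI x y g1, fun x y g0 g1 => cI x y g1,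
      ?_, ?_⟩
    · intro x y hx
      rcases hx with hx | hx
      · exact Or.inl (yH x y hx)
      · exact Or.inl (hl x y hx.symm)
    · intro x y hx
      rcases hx with hx | hx
      · exact Or.inl (yV x y hx)
      · exact Or.inl (hd x y hx.symm)
    · intro x y hh g0 g1
      exfalso
      apply g1
      rw [hh] at hcr
      exact hcr
    · intro x y hh g0 g1
      exfalso
      apply g1
      rw [hh] at hcu
      exact hcu
  have hbnd : c.1 + c.2 ≤ n := le_trans I.bound (Nat.sub_le n b)
  obtain ⟨IV, hole0, Vsh⟩ := backward_spec n U c I hbnd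
  rw [hole0] at IV Vsh
  set V : Filling := (rslideIter n U c).1 with hV
  have hRx : ∀ x : Cell, rjdt b n U c x = if x = ((0,0) : Cell) then b else V x :=
    fun x => rfl
  have hRstd : IsStdFilling (rjdt b n U c) (b-1) n := by
    refine ⟨?_, ?_, ?_, ?_, ?_, ?_⟩
    · intro k hk1 hk2
      by_cases hkb : k = b
      · refine ⟨((0,0) : Cell), ?_, fun y hy => ?_⟩
        · show rjdt b n U c ((0,0) : Cell) = k
          rw [hRx, if_pos rfl, hkb]
        · have hy' : rjdt b n U c y = k := hy
          rw [hRx] at hy'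
          by_cases hy0 : y = ((0,0) : Cell)
          · exact hy0
          · exfalso
            rw [if_neg hy0] at hy'
            rcases (IV.vals y).2 with h | h <;> omega
      · obtain ⟨c', hc', hu'⟩ := IV.uniq k (by omega) hk2
        have hc'0 : c' ≠ ((0,0) : Cell) := by
          intro e; rw [e, IV.hole] at hc'; omega
        refine ⟨c', ?_, fun y hy => ?_⟩
        · show rjdt b n U c c' = k
          rw [hRx, if_neg hc'0]; exact hc'
        · have hy' : rjdt b n U c y = k := hy
          rw [hRx] at hy'
          by_cases hy0 : y = ((0,0) : Cell)
          · rw [if_pos hy0] at hy'; omega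
          · rw [if_neg hy0] at hy'; exact hu' y hy'
    · intro x
      rw [hRx]
      by_cases hx : x = ((0,0) : Cell)
      · rw [if_pos hx]; exact ⟨hbn, Or.inr (by omega)⟩
      · rw [if_neg hx]
        refine ⟨(IV.vals x).1, ?_⟩
        rcases (IV.vals x).2 with h | h
        · exact Or.inl h
        · exact Or.inr (by omega)
    · intro x y hx
      rw [hRx] at hx
      rw [hRx]
      have hx1 : ((x+1,y) : Cell) ≠ ((0,0) : Cell) := cell_ne (by omega)
      rw [if_neg hx1] at hx
      rcases IV.youngH x y (Or.inl hx) with H | H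
      · by_cases h0 : ((x,y) : Cell) = ((0,0) : Cell)
        · rw [if_pos h0]; omega
        · rw [if_neg h0]; exact H
      · rw [if_pos H]; omega
    · intro x y hx
      rw [hRx] at hx
      rw [hRx]
      have hx1 : ((x,y+1) : Cell) ≠ ((0,0) : Cell) := cell_ne (by omega)
      rw [if_neg hx1] at hx
      rcases IV.youngV x y (Or.inl hx) with H | H
      · by_cases h0 : ((x,y) : Cell) = ((0,0) : Cell)
        · rw [if_pos h0]; omega
        · rw [if_neg h0]; exact H
      · rw [if_pos H]; omega
    · intro x y hx
      rw [hRx] at hx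
      rw [hRx, hRx]
      have hx1 : ((x+1,y) : Cell) ≠ ((0,0) : Cell) := cell_ne (by omega)
      rw [if_neg hx1] at hx ⊢
      by_cases h0 : ((x,y) : Cell) = ((0,0) : Cell)
      · rw [if_pos h0]
        rcases (IV.vals (x+1,y)).2 with h | h <;> omega
      · rw [if_neg h0]
        rcases Nat.eq_zero_or_pos (V (x,y)) with hz | hz
        · omega
        · exact IV.rowInc x y (by omega) hx
    · intro x y hx
      rw [hRx] at hx
      rw [hRx, hRx]
      have hx1 : ((x,y+1) : Cell) ≠ ((0,0) : Cell) := cell_ne (by omega)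
      rw [if_neg hx1] at hx ⊢
      by_cases h0 : ((x,y) : Cell) = ((0,0) : Cell)
      · rw [if_pos h0]
        rcases (IV.vals (x,y+1)).2 with h | h <;> omega
      · rw [if_neg h0]
        rcases Nat.eq_zero_or_pos (V (x,y)) with hz | hz
        · omega
        · exact IV.colInc x y (by omega) hx
  have hsh : ∀ x : Cell, rjdt b n U c x ≠ 0 ↔ (U x ≠ 0 ∨ x = c) := by
    intro x
    rw [hRx]
    by_cases hx : x = ((0,0) : Cell)
    · rw [if_pos hx]
      constructor
      · intro _
        rcases (Vsh x).mp (Or.inr hx) with H | H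
        · exact Or.inl H
        · exact Or.inr H
      · intro _; omega
    · rw [if_neg hx]
      constructor
      · intro hv
        exact (Vsh x).mp (Or.inl hv)
      · intro hu
        rcases (Vsh x).mpr hu with H | H
        · exact H
        · exact absurd H hx
  have hdel : (fun x => if x = ((0,0) : Cell) then 0 else rjdt b n U c x) = V := by
    funext x
    show (if x = ((0,0) : Cell) then 0 else rjdt b n U c x) = V x
    by_cases hx : x = ((0,0) : Cell)
    · rw [if_pos hx, hx]
      exact IV.hole.symm
    · rw [if_neg hx, hRx, if_neg hx]
  have hfb : slideIter n V ((0,0) : Cell) = slideIter n U c := by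
    have h2 := forward_backward (b := b) n U c I
    rw [← hole0]
    exact h2
  have hterm : slideIter n U c = (U, c) := by
    apply slideIter_terminal
    exact ⟨hcr, hcu⟩
  have hjaux : jdtAux n (rjdt b n U c) = (U, c) := by
    show slideIter n (fun x => if x = ((0,0) : Cell) then 0 else rjdt b n U c x) ((0,0) : Cell)
      = (U, c)
    rw [hdel, hfb, hterm]
  refine ⟨hRstd, hsh, ?_, ?_⟩
  · show (jdtAux n (rjdt b n U c)).1 = U
    rw [hjaux]
  · show (jdtAux n (rjdt b n U c)).2 = c
    rw [hjaux]

end Stmt9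
namespace Stmt9

/-- Rebuild a square tableau from a modified water configuration, following the
jeu de taquin path data of `T`. -/
def rebuild (n : ℕ) : ℕ → ℕ → Filling → Filling → Filling
  | _, 0, _, G' => G'
  | a, m+1, T, G' => rjdt (a+1) n (rebuild n (a+1) m (jdt n T) G') (holeEnd n T)

theorem transport (n : ℕ) : ∀ (m a : ℕ) (T G' : Filling),
    a + m ≤ n → IsStdFilling T a n → IsStdFilling G' (a+m) n →
    (∀ c : Cell, G' c ≠ 0 ↔ ((jdt n)^[m] T) c ≠ 0) →
    IsStdFilling (rebuild n a m T G') a n ∧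
    (∀ c : Cell, (rebuild n a m T G') c ≠ 0 ↔ T c ≠ 0) ∧
    (jdt n)^[m] (rebuild n a m T G') = G' ∧
    rebuild n a m (rebuild n a m T G') ((jdt n)^[m] T) = T := by
  intro m
  induction m with
  | zero =>
      intro a T G' hle hT hG hsh
      exact ⟨hG, fun c => hsh c, rfl, rfl⟩
  | succ m ih =>
      intro a T G' hle hT hG hsh
      have han : a < n := by omega
      obtain ⟨hstd1, hshape1, hhole, hter1, hter2, hleft, hbelow, hrec⟩ := jdt_spec hT han
      set G1 := jdt n T with hG1
      set hE := holeEnd n T with hhE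
      have hGm : IsStdFilling G' (a+1+m) n := by
        have e : a+1+m = a+(m+1) := by omega
        rw [e]; exact hG
      have hsh1 : ∀ c : Cell, G' c ≠ 0 ↔ ((jdt n)^[m] G1) c ≠ 0 := by
        intro c
        have h2 := hsh c
        rw [Function.iterate_succ_apply] at h2
        exact h2
      obtain ⟨ihstd, ihsh, ihit, ihinv⟩ := ih (a+1) G1 G' (by omega) hstd1 hGm hsh1
      set U := rebuild n (a+1) m G1 G' with hU
      have hUc : U hE = 0 := by
        by_contra h0
        exact ((ihsh hE).mp h0) hhole
      have hUr : U (hE.1+1, hE.2) = 0 := by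
        by_contra h0
        exact ((ihsh _).mp h0) hter1
      have hUu : U (hE.1, hE.2+1) = 0 := by
        by_contra h0
        exact ((ihsh _).mp h0) hter2
      have hUl : ∀ x y : ℕ, hE = ((x+1,y) : Cell) → U (x,y) ≠ 0 :=
        fun x y he => (ihsh (x,y)).mpr (hleft x y he)
      have hUd : ∀ x y : ℕ, hE = ((x,y+1) : Cell) → U (x,y) ≠ 0 :=
        fun x y he => (ihsh (x,y)).mpr (hbelow x y he)
      obtain ⟨Rstd, Rsh, Rjdt, Rhole⟩ :=
        rjdt_spec ihstd (by omega : 1 ≤ a+1) (by omega : a+1 ≤ n) hUc hUr hUu hUl hUd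
      have hreb : rebuild n a (m+1) T G' = rjdt (a+1) n U hE := rfl
      refine ⟨?_, ?_, ?_, ?_⟩
      · rw [hreb]; exact Rstd
      · intro c
        rw [hreb]
        exact (Rsh c).trans (by
          constructor
          · rintro (h | h)
            · exact (hshape1 c).mp (Or.inl ((ihsh c).mp h))
            · exact (hshape1 c).mp (Or.inr h)
          · intro h
            rcases (hshape1 c).mpr h with h2 | h2
            · exact Or.inl ((ihsh c).mpr h2)
            · exact Or.inr h2)
      · rw [hreb, Function.iterate_succ_apply, Rjdt, ihit]
      · show rjdt (a+1) n (rebuild n (a+1) m (jdt n (rebuild n a (m+1) T G'))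
          ((jdt n)^[m+1] T)) (holeEnd n (rebuild n a (m+1) T G')) = T
        rw [hreb] at *
        rw [Rjdt, Rhole, Function.iterate_succ_apply, ← hG1, ihinv]
        exact hrec

end Stmt9
namespace Stmt9

/-- Shift the entries of `S` up by `m` and put the entry `M` into the box `c`. -/
def lift (m M : ℕ) (S : Filling) (c : Cell) : Filling :=
  fun x => if x = c then M else if S x = 0 then 0 else S x + m

lemma pos_spec {F : Filling} {k : ℕ} {c : Cell} (hc : F c = k)
    (hu : ∀ y : Cell, F y = k → y = c) : pos F k = c := by
  have hex : ∃ x : Cell, F x = k := ⟨c, hc⟩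
  rw [pos, dif_pos hex]
  exact hu _ hex.choose_spec

lemma sq_card (N : ℕ) : (squareDiagram N).card = N ^ 2 := by
  rw [squareDiagram, Finset.card_product, Finset.card_range, pow_two]

lemma jdt_iter_std {n : ℕ} {T : Filling} (hT : IsStdFilling T 0 n) :
    ∀ m, m ≤ n → IsStdFilling ((jdt n)^[m] T) m n := by
  intro m
  induction m with
  | zero => intro _; exact hT
  | succ m ih =>
      intro hm
      rw [Function.iterate_succ_apply']
      exact (jdt_spec (ih (by omega)) (by omega)).1

/-- Decomposition of the water configuration equation. -/
lemma water_decomp {M m : ℕ} {G S : Filling} (hG : IsStdFilling G m M) (hmM : m < M)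
    {cm : Cell} (hcm : G cm = M) (hum : ∀ y : Cell, G y = M → y = cm)
    (hW : (fun x => if G x - m = M - m then 0 else G x - m) = S) :
    S cm = 0 ∧ G = lift m M S cm := by
  have hSx : ∀ x : Cell, S x = if G x - m = M - m then 0 else G x - m :=
    fun x => (congrFun hW x).symm
  have hScm : S cm = 0 := by
    rw [hSx cm, hcm, if_pos rfl]
  refine ⟨hScm, ?_⟩
  funext x
  show G x = if x = cm then M else if S x = 0 then 0 else S x + m
  by_cases hx : x = cm
  · rw [if_pos hx, hx, hcm]
  · rw [if_neg hx]
    have hne : G x ≠ M := fun e => hx (hum x e)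
    have hvals := hG.2.1 x
    rcases hvals.2 with h0 | h0
    · have : S x = 0 := by
        rw [hSx x, h0, if_neg (by omega)]
        omega
      rw [if_pos this, h0]
    · have hSx' : S x = G x - m := by
        rw [hSx x, if_neg (by omega)]
      have : S x ≠ 0 := by omega
      rw [if_neg this, hSx']
      omega

/-- Inverse direction: a lifted configuration has the prescribed water configuration. -/
lemma water_recomp {M m w : ℕ} {S : Filling} {c : Cell} (hw : w + m + 1 = M)
    (hvals : ∀ x : Cell, S x ≤ w) (hSc : S c = 0) :
    (fun x => if lift m M S c x - m = M - m then 0 else lift m M S c x - m) = S := by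
  funext x
  by_cases hx : x = c
  · subst hx
    show (if lift m M S x x - m = M - m then 0 else _) = S x
    rw [show lift m M S x x = M from if_pos rfl, if_pos rfl, hSc]
  · show (if lift m M S c x - m = M - m then 0 else lift m M S c x - m) = S x
    have hl : lift m M S c x = if S x = 0 then 0 else S x + m := if_neg hx
    by_cases hs : S x = 0
    · rw [hl, if_pos hs, if_neg (by omega), hs]
      omega
    · rw [hl, if_neg hs, if_neg (by have := hvals x; omega)]
      omega

/-- Replacing the sub-tableau of a lifted configuration by another one of the
same shape yields a standard filling of the same shape. -/
lemma lift_std {M m w : ℕ} {S' S G : Filling} {c : Cell}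
    (hS' : IsStdFilling S' 0 w) (hw : w + m + 1 = M)
    (hGstd : IsStdFilling G m M) (hGeq : G = lift m M S c)
    (hSc : S c = 0) (hS'c : S' c = 0)
    (hss : ∀ x : Cell, S' x ≠ 0 ↔ S x ≠ 0) :
    IsStdFilling (lift m M S' c) m M ∧
    (∀ x : Cell, lift m M S' c x ≠ 0 ↔ G x ≠ 0) := by
  obtain ⟨uniq', vals', yH', yV', rI', cI'⟩ := hS'
  have hM1 : 1 ≤ M := by omega
  have hsh : ∀ x : Cell, lift m M S' c x ≠ 0 ↔ G x ≠ 0 := by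
    intro x
    rw [hGeq]
    by_cases hx : x = c
    · rw [show lift m M S' c x = M from by rw [lift, if_pos hx],
        show lift m M S c x = M from by rw [lift, if_pos hx]]
    · rw [show lift m M S' c x = if S' x = 0 then 0 else S' x + m from by rw [lift, if_neg hx],
        show lift m M S c x = if S x = 0 then 0 else S x + m from by rw [lift, if_neg hx]]
      by_cases hs : S' x = 0
      · have hs2 : S x = 0 := by
          by_contra h0
          exact ((hss x).mpr h0) hs
        rw [if_pos hs, if_pos hs2]
      · have hs2 : S x ≠ 0 := (hss x).mp hs
        rw [if_neg hs, if_neg hs2]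
        constructor <;> intro _ <;> omega
  have hLc : lift m M S' c c = M := if_pos rfl
  have hLother : ∀ x : Cell, x ≠ c → lift m M S' c x = if S' x = 0 then 0 else S' x + m :=
    fun x hx => if_neg hx
  refine ⟨⟨?_, ?_, ?_, ?_, ?_, ?_⟩, hsh⟩
  · intro k hk1 hk2
    by_cases hkM : k = M
    · refine ⟨c, by show lift m M S' c c = k; rw [hLc, hkM], fun y hy => ?_⟩
      have hy' : lift m M S' c y = k := hy
      by_cases hyc : y = c
      · exact hyc
      · exfalso
        rw [hLother y hyc] at hy'
        by_cases hs : S' y = 0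
        · rw [if_pos hs] at hy'; omega
        · rw [if_neg hs] at hy'
          have := (vals' y).1
          omega
    · obtain ⟨d, hd, hud⟩ := uniq' (k - m) (by omega) (by omega)
      have hdc : d ≠ c := by
        intro e; rw [e, hS'c] at hd; omega
      refine ⟨d, ?_, fun y hy => ?_⟩
      · show lift m M S' c d = k
        rw [hLother d hdc, if_neg (by omega)]
        omega
      · have hy' : lift m M S' c y = k := hy
        by_cases hyc : y = c
        · rw [hyc, hLc] at hy'; omega
        · rw [hLother y hyc] at hy'
          by_cases hs : S' y = 0
          · rw [if_pos hs] at hy'; omega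
          · rw [if_neg hs] at hy'
            exact hud y (by omega)
  · intro x
    by_cases hx : x = c
    · rw [hx, hLc]
      exact ⟨le_rfl, Or.inr (by omega)⟩
    · rw [hLother x hx]
      by_cases hs : S' x = 0
      · rw [if_pos hs]; exact ⟨Nat.zero_le M, Or.inl rfl⟩
      · rw [if_neg hs]
        have := (vals' x).1
        exact ⟨by omega, Or.inr (by omega)⟩
  · intro x y hx
    have h1 := (hsh (x,y)).mpr (hGstd.2.2.1 x y ((hsh (x+1,y)).mp hx))
    exact h1
  · intro x y hx
    exact (hsh (x,y)).mpr (hGstd.2.2.2.1 x y ((hsh (x,y+1)).mp hx))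
  · intro x y hx
    by_cases hc1 : ((x+1,y) : Cell) = c
    · by_cases hc0 : ((x,y) : Cell) = c
      · exact absurd (hc0.trans hc1.symm) (cell_ne (by omega))
      · rw [hc1, hLc, hLother _ hc0]
        by_cases hs : S' (x,y) = 0
        · rw [if_pos hs]; omega
        · rw [if_neg hs]
          have := (vals' (x,y)).1
          omega
    · have hsx : S' (x+1,y) ≠ 0 := by
        intro h0
        apply hx
        rw [hLother _ hc1, if_pos h0]
      by_cases hc0 : ((x,y) : Cell) = c
      · exfalso
        have hGc : G (x,y) = M := by rw [hGeq, hc0]; exact if_pos rfl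
        have hG1 : G (x+1,y) ≠ 0 := (hsh (x+1,y)).mp hx
        have hlt := hGstd.2.2.2.2.1 x y hG1
        have := (hGstd.2.1 (x+1,y)).1
        omega
      · rw [hLother _ hc1, if_neg hsx, hLother _ hc0]
        by_cases hs : S' (x,y) = 0
        · rw [if_pos hs]; omega
        · rw [if_neg hs]
          have := rI' x y hsx
          omega
  · intro x y hx
    by_cases hc1 : ((x,y+1) : Cell) = c
    · by_cases hc0 : ((x,y) : Cell) = c
      · exact absurd (hc0.trans hc1.symm) (cell_ne (by omega))
      · rw [hc1, hLc, hLother _ hc0]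
        by_cases hs : S' (x,y) = 0
        · rw [if_pos hs]; omega
        · rw [if_neg hs]
          have := (vals' (x,y)).1
          omega
    · have hsx : S' (x,y+1) ≠ 0 := by
        intro h0
        apply hx
        rw [hLother _ hc1, if_pos h0]
      by_cases hc0 : ((x,y) : Cell) = c
      · exfalso
        have hGc : G (x,y) = M := by rw [hGeq, hc0]; exact if_pos rfl
        have hG1 : G (x,y+1) ≠ 0 := (hsh (x,y+1)).mp hx
        have hlt := hGstd.2.2.2.2.2 x y hG1
        have := (hGstd.2.1 (x,y+1)).1
        omega
      · rw [hLother _ hc1, if_neg hsx, hLother _ hc0]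
        by_cases hs : S' (x,y) = 0
        · rw [if_pos hs]; omega
        · rw [if_neg hs]
          have := cI' x y hsx
          omega

end Stmt9
namespace Stmt9

/-- The transport bijection: rebuild `T` with target water configuration `S'`. -/
noncomputable def Phi (N m : ℕ) (S' : Filling) (T : Filling) : Filling :=
  rebuild (N ^ 2) 0 m T (lift m (N ^ 2) S' (pos ((jdt (N ^ 2))^[m] T) (N ^ 2)))

lemma main_map {N m : ℕ} (hN : 1 ≤ N) (hm : m ≤ N ^ 2 - 1)
    {lam : Finset Cell} {S S' : Filling} (hS : IsSYTof S lam) (hS' : IsSYTof S' lam)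
    (hcard : lam.card = N ^ 2 - m - 1)
    {T : Filling} (hT : IsSquareSYT N T) (hWT : waterSingle N m T = S) :
    IsSquareSYT N (Phi N m S' T) ∧ waterSingle N m (Phi N m S' T) = S' ∧
    Phi N m S (Phi N m S' T) = T := by
  have hn1 : 1 ≤ N ^ 2 := Nat.one_le_pow 2 N (by omega)
  have hmn : m < N ^ 2 := by omega
  have hsq := sq_card N
  have hTstd : IsStdFilling T 0 (N ^ 2) := by rw [← hsq]; exact hT.1
  have hGstd : IsStdFilling ((jdt (N ^ 2))^[m] T) m (N ^ 2) := jdt_iter_std hTstd m (by omega)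
  obtain ⟨cm, hcm, hum⟩ := hGstd.1 (N ^ 2) hmn le_rfl
  have hum' : ∀ y : Cell, ((jdt (N ^ 2))^[m] T) y = N ^ 2 → y = cm := fun y hy => hum y hy
  have hposG : pos ((jdt (N ^ 2))^[m] T) (N ^ 2) = cm := pos_spec hcm hum'
  have hW' : (fun x => if ((jdt (N ^ 2))^[m] T) x - m = N ^ 2 - m then 0
      else ((jdt (N ^ 2))^[m] T) x - m) = S := hWT
  obtain ⟨hScm, hGc⟩ := water_decomp hGstd hmn hcm hum' hW'
  have hS'std : IsStdFilling S' 0 (N ^ 2 - m - 1) := by rw [← hcard]; exact hS'.1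
  have hss : ∀ x : Cell, S' x ≠ 0 ↔ S x ≠ 0 := fun x => ((hS'.2 x).symm.trans (hS.2 x))
  have hS'cm : S' cm = 0 := by
    by_contra h0
    exact ((hss cm).mp h0) hScm
  have hw : (N ^ 2 - m - 1) + m + 1 = N ^ 2 := by omega
  obtain ⟨hLstd, hLsh⟩ := lift_std hS'std hw hGstd hGc hScm hS'cm hss
  have hLstd0 : IsStdFilling (lift m (N ^ 2) S' cm) (0 + m) (N ^ 2) := by
    rw [Nat.zero_add]; exact hLstd
  obtain ⟨Rstd, Rsh, Rit, Rinv⟩ :=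
    transport (N ^ 2) m 0 T (lift m (N ^ 2) S' cm) (by omega) hTstd hLstd0 hLsh
  have hPhiT : Phi N m S' T = rebuild (N ^ 2) 0 m T (lift m (N ^ 2) S' cm) := by
    rw [Phi, hposG]
  refine ⟨⟨?_, ?_⟩, ?_, ?_⟩
  · rw [hPhiT, hsq]; exact Rstd
  · intro c; rw [hPhiT]; exact (hT.2 c).trans (Rsh c).symm
  · rw [hPhiT]
    show (fun x =>
      if ((jdt (N ^ 2))^[m] (rebuild (N ^ 2) 0 m T (lift m (N ^ 2) S' cm))) x - m = N ^ 2 - m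
      then 0
      else ((jdt (N ^ 2))^[m] (rebuild (N ^ 2) 0 m T (lift m (N ^ 2) S' cm))) x - m) = S'
    rw [Rit]
    exact water_recomp hw (fun x => (hS'std.2.1 x).1) hS'cm
  · rw [hPhiT]
    have hposR : pos ((jdt (N ^ 2))^[m] (rebuild (N ^ 2) 0 m T (lift m (N ^ 2) S' cm)))
        (N ^ 2) = cm := by
      rw [Rit]
      obtain ⟨c2, hc2, hu2⟩ := hLstd.1 (N ^ 2) hmn le_rfl
      exact pos_spec (show lift m (N ^ 2) S' cm cm = N ^ 2 from if_pos rfl)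
        (fun y hy => (hu2 y hy).trans (hu2 cm (if_pos rfl)).symm)
    rw [Phi, hposR, ← hGc]
    exact Rinv

end Stmt9
/-- Fix `N ≥ 1` and `0 ≤ m ≤ N²-1`, set `w := N²-m-1`, and let `lam`
be a Young diagram with `w` boxes contained in `□_N`.  For any two standard Young
tableaux `S, S'` of shape `lam`, the number of `T ∈ 𝒯_{□_N}` whose water configuration
`W'(T)` equals `S` is the same as the number of those with `W'(T) = S'`: the conditional
distribution of the water configuration given its shape `lam` is uniform on `𝒯_lam`. -/
theorem stmt9 (N m : ℕ) (hN : 1 ≤ N) (hm : m ≤ N ^ 2 - 1)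
    (lam : Finset Cell) (hlam : IsYoung lam) (hcard : lam.card = N ^ 2 - m - 1)
    (hsub : lam ⊆ squareDiagram N)
    (S S' : Filling) (hS : IsSYTof S lam) (hS' : IsSYTof S' lam) :
    {T : Filling | IsSquareSYT N T ∧ waterSingle N m T = S}.ncard =
    {T : Filling | IsSquareSYT N T ∧ waterSingle N m T = S'}.ncard := by
  classical
  have h1 : ∀ T ∈ {T : Filling | IsSquareSYT N T ∧ waterSingle N m T = S},
      IsSquareSYT N (Stmt9.Phi N m S' T) ∧ waterSingle N m (Stmt9.Phi N m S' T) = S' ∧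
      Stmt9.Phi N m S (Stmt9.Phi N m S' T) = T :=
    fun T hT => Stmt9.main_map hN hm hS hS' hcard hT.1 hT.2
  have h2 : ∀ T ∈ {T : Filling | IsSquareSYT N T ∧ waterSingle N m T = S'},
      IsSquareSYT N (Stmt9.Phi N m S T) ∧ waterSingle N m (Stmt9.Phi N m S T) = S ∧
      Stmt9.Phi N m S' (Stmt9.Phi N m S T) = T :=
    fun T hT => Stmt9.main_map hN hm hS' hS hcard hT.1 hT.2
  have himg : Stmt9.Phi N m S' '' {T : Filling | IsSquareSYT N T ∧ waterSingle N m T = S}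
      = {T : Filling | IsSquareSYT N T ∧ waterSingle N m T = S'} := by
    apply Set.Subset.antisymm
    · rintro _ ⟨T, hT, rfl⟩
      exact ⟨(h1 T hT).1, (h1 T hT).2.1⟩
    · intro y hy
      exact ⟨Stmt9.Phi N m S y, ⟨(h2 y hy).1, (h2 y hy).2.1⟩, (h2 y hy).2.2⟩
  have hinj : Set.InjOn (Stmt9.Phi N m S')
      {T : Filling | IsSquareSYT N T ∧ waterSingle N m T = S} := by
    intro x hx y hy e
    rw [← (h1 x hx).2.2, ← (h1 y hy).2.2, e]
  calc {T : Filling | IsSquareSYT N T ∧ waterSingle N m T = S}.ncard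
      = (Stmt9.Phi N m S' '' {T : Filling | IsSquareSYT N T ∧ waterSingle N m T = S}).ncard :=
        (Set.ncard_image_of_injOn hinj).symm
    _ = {T : Filling | IsSquareSYT N T ∧ waterSingle N m T = S'}.ncard := by rw [himg]
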